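/- arXiv:2306.08914 — 8 statements merged into one kernel-verified Lean document; each statement's English description precedes it below -/
import Mathlib

section
/- Let x : [0, t_f] → 𝕏 be a continuously differentiable solution of the RIPHS state equation ẋ(t) = (J₀(x(t)) + Σ_{k=1}^N γ_k(x(t)) {S,H}_{J_k}(x(t)) J_k) H_x(x(t)) + g(x(t)) u(t) for a continuous control u : [0,t_f] → ℝ^m. Then the entropy balance holds: for every t ∈ [0, t_f], d/dt S(x(t)) = Σ_{k=1}^N γ_k(x(t)) · ({S,H}_{J_k}(x(t)))² + y_S(t)ᵀ u(t), where y_S(t) = g(x(t))ᵀ S_x(x(t)). In particular, if g ≡ 0 then S is nondecreasing along solutions. -/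
open Set Matrix

/-- Matrix–vector multiplication on Euclidean space. -/
noncomputable def mv {a b : ℕ} (A : Matrix (Fin a) (Fin b) ℝ)
    (x : EuclideanSpace ℝ (Fin b)) : EuclideanSpace ℝ (Fin a) :=
  Matrix.toEuclideanLin A x

/-- The Poisson bracket `{S,H}_J(x) = S_x(x)ᵀ J H_x(x)`, evaluated at given gradients. -/
noncomputable def bracket {n : ℕ} (J : Matrix (Fin n) (Fin n) ℝ)
    (Sx Hx : EuclideanSpace ℝ (Fin n)) : ℝ :=
  inner ℝ Sx (mv J Hx)


lemma conjT_eq {a b : ℕ} (A : Matrix (Fin a) (Fin b) ℝ) : A.conjTranspose = Aᵀ := by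
  ext i j; simp [Matrix.conjTranspose_apply]

lemma inner_mv_left {a b : ℕ} (A : Matrix (Fin a) (Fin b) ℝ)
    (x : EuclideanSpace ℝ (Fin b)) (y : EuclideanSpace ℝ (Fin a)) :
    (inner ℝ (mv A x) y : ℝ) = inner ℝ x (mv Aᵀ y) := by
  rw [← conjT_eq, mv, mv, Matrix.toEuclideanLin_conjTranspose_eq_adjoint]
  exact (LinearMap.adjoint_inner_right _ x y).symm

lemma mv_add {a b : ℕ} (A B : Matrix (Fin a) (Fin b) ℝ) (x : EuclideanSpace ℝ (Fin b)) :
    mv (A + B) x = mv A x + mv B x := by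
  simp [mv, map_add]

lemma mv_smul {a b : ℕ} (c : ℝ) (A : Matrix (Fin a) (Fin b) ℝ) (x : EuclideanSpace ℝ (Fin b)) :
    mv (c • A) x = c • mv A x := by
  simp [mv, _root_.map_smul]

lemma mv_sum {a b : ℕ} {ι : Type*} (s : Finset ι) (A : ι → Matrix (Fin a) (Fin b) ℝ)
    (x : EuclideanSpace ℝ (Fin b)) :
    mv (∑ k ∈ s, A k) x = ∑ k ∈ s, mv (A k) x := by
  simp [mv, map_sum, LinearMap.sum_apply]

/-- Entropy balance for solutions of a reversible-irreversible port-Hamiltonian system: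
`d/dt S(x(t)) = Σ_k γ_k(x(t)) ({S,H}_{J_k}(x(t)))² + y_S(t)ᵀ u(t)` with
`y_S(t) = g(x(t))ᵀ S_x(x(t))`; in particular, if `g ≡ 0` then `S` is nondecreasing
along the solution. -/
theorem entropy_balance_RIPHS
    (n N m : ℕ)
    (X : Set (EuclideanSpace ℝ (Fin n))) (hXopen : IsOpen X)
    -- Poisson structure matrix field J₀ : continuous, skew-symmetric
    (J0 : EuclideanSpace ℝ (Fin n) → Matrix (Fin n) (Fin n) ℝ)
    (hJ0cont : ContinuousOn J0 X)
    (hJ0skew : ∀ p ∈ X, (J0 p)ᵀ = -(J0 p))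
    -- Hamiltonian H, differentiable with continuous gradient Hx
    (H : EuclideanSpace ℝ (Fin n) → ℝ)
    (Hx : EuclideanSpace ℝ (Fin n) → EuclideanSpace ℝ (Fin n))
    (hH : ∀ p ∈ X, HasGradientAt H (Hx p) p)
    (hHxcont : ContinuousOn Hx X)
    -- entropy S, differentiable with continuous gradient Sx, Casimir of J₀
    (S : EuclideanSpace ℝ (Fin n) → ℝ)
    (Sx : EuclideanSpace ℝ (Fin n) → EuclideanSpace ℝ (Fin n))
    (hS : ∀ p ∈ X, HasGradientAt S (Sx p) p)
    (hSxcont : ContinuousOn Sx X)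
    (hCasimir : ∀ p ∈ X, mv (J0 p) (Sx p) = 0)
    -- constant skew-symmetric structure matrices J₁,…,J_N
    (J : Fin N → Matrix (Fin n) (Fin n) ℝ)
    (hJskew : ∀ k, (J k)ᵀ = -(J k))
    -- positive continuous functions γ_k
    (γ : Fin N → EuclideanSpace ℝ (Fin n) → ℝ)
    (hγpos : ∀ k, ∀ p ∈ X, 0 < γ k p)
    (hγcont : ∀ k, ContinuousOn (γ k) X)
    -- continuous input matrix g
    (g : EuclideanSpace ℝ (Fin n) → Matrix (Fin n) (Fin m) ℝ)
    (hgcont : ContinuousOn g X)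
    -- a continuously differentiable solution x on [0, t_f] with continuous control u
    (tf : ℝ) (htf : 0 ≤ tf)
    (x : ℝ → EuclideanSpace ℝ (Fin n))
    (u : ℝ → EuclideanSpace ℝ (Fin m))
    (hu : ContinuousOn u (Icc 0 tf))
    (hxmem : ∀ t ∈ Icc 0 tf, x t ∈ X)
    (x' : ℝ → EuclideanSpace ℝ (Fin n))
    (hx'cont : ContinuousOn x' (Icc 0 tf))
    (hxdiff : ∀ t ∈ Icc 0 tf, HasDerivWithinAt x (x' t) (Icc 0 tf) t)
    -- the RIPHS state equation
    (hdyn : ∀ t ∈ Icc 0 tf,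
      x' t =
        mv (J0 (x t) + ∑ k, (γ k (x t) * bracket (J k) (Sx (x t)) (Hx (x t))) • J k)
           (Hx (x t))
        + mv (g (x t)) (u t)) :
    -- entropy balance
    (∀ t ∈ Icc 0 tf,
      HasDerivWithinAt (fun s => S (x s))
        ((∑ k, γ k (x t) * (bracket (J k) (Sx (x t)) (Hx (x t)))^2)
          + (inner ℝ (mv (g (x t))ᵀ (Sx (x t))) (u t) : ℝ)) (Icc 0 tf) t)
    ∧ ((∀ p, g p = 0) → MonotoneOn (fun t => S (x t)) (Icc 0 tf)) := by
  have key : ∀ t ∈ Icc 0 tf,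
      HasDerivWithinAt (fun s => S (x s))
        ((∑ k, γ k (x t) * (bracket (J k) (Sx (x t)) (Hx (x t)))^2)
          + (inner ℝ (mv (g (x t))ᵀ (Sx (x t))) (u t) : ℝ)) (Icc 0 tf) t := by
    intro t ht
    have hmem := hxmem t ht
    have hcomp : HasDerivWithinAt (fun s => S (x s))
        ((inner ℝ (Sx (x t)) (x' t) : ℝ)) (Icc 0 tf) t := by
      have hfd := (hS (x t) hmem).hasFDerivAt
      have := hfd.comp_hasDerivWithinAt t (hxdiff t ht)
      exact this
    have hval : (inner ℝ (Sx (x t)) (x' t) : ℝ) =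
        (∑ k, γ k (x t) * (bracket (J k) (Sx (x t)) (Hx (x t)))^2)
          + (inner ℝ (mv (g (x t))ᵀ (Sx (x t))) (u t) : ℝ) := by
      rw [hdyn t ht, inner_add_right, mv_add, mv_sum, inner_add_right]
      have h0 : (inner ℝ (Sx (x t)) (mv (J0 (x t)) (Hx (x t))) : ℝ) = 0 := by
        have : (inner ℝ (mv (J0 (x t)) (Sx (x t))) (Hx (x t)) : ℝ)
            = inner ℝ (Sx (x t)) (mv (J0 (x t))ᵀ (Hx (x t))) := inner_mv_left _ _ _
        rw [hCasimir _ hmem] at this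
        simp only [inner_zero_left] at this
        have h2 : (inner ℝ (Sx (x t)) (mv (-(J0 (x t))) (Hx (x t))) : ℝ) = 0 := by
          rw [← hJ0skew _ hmem]; exact this.symm
        have : mv (-(J0 (x t))) (Hx (x t)) = -(mv (J0 (x t)) (Hx (x t))) := by
          simpa using mv_smul (-1 : ℝ) (J0 (x t)) (Hx (x t))
        rw [this, inner_neg_right] at h2
        linarith
      have hsum : (inner ℝ (Sx (x t))
          (∑ k, mv ((γ k (x t) * bracket (J k) (Sx (x t)) (Hx (x t))) • J k) (Hx (x t))) : ℝ)
          = ∑ k, γ k (x t) * (bracket (J k) (Sx (x t)) (Hx (x t)))^2 := by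
        rw [inner_sum]
        refine Finset.sum_congr rfl fun k _ => ?_
        rw [mv_smul, inner_smul_right]
        unfold bracket; ring
      have hg : (inner ℝ (Sx (x t)) (mv (g (x t)) (u t)) : ℝ)
          = inner ℝ (mv (g (x t))ᵀ (Sx (x t))) (u t) := by
        rw [inner_mv_left, Matrix.transpose_transpose]
      rw [h0, hsum, hg]; ring
    rwa [hval] at hcomp
  refine ⟨key, fun hg0 => ?_⟩
  have hcontS : ContinuousOn (fun s => S (x s)) (Icc 0 tf) :=
    fun t ht => ((key t ht).continuousWithinAt)
  refine monotoneOn_of_hasDerivWithinAt_nonneg (convex_Icc 0 tf) hcontS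
    (f' := fun t => (∑ k, γ k (x t) * (bracket (J k) (Sx (x t)) (Hx (x t)))^2)
          + (inner ℝ (mv (g (x t))ᵀ (Sx (x t))) (u t) : ℝ))
    (fun t ht => ((key t (interior_subset ht)).mono interior_subset)) ?_
  intro t ht
  have hmem := hxmem t (interior_subset ht)
  have : (inner ℝ (mv (g (x t))ᵀ (Sx (x t))) (u t) : ℝ) = 0 := by
    rw [hg0]; simp [mv]
  rw [this, add_zero]
  refine Finset.sum_nonneg fun k _ => ?_
  exact mul_nonneg (hγpos k _ hmem).le (sq_nonneg _)
end

section
/- Assume H ∈ C²(𝕏, ℝ), S(x) = eᵀx for some e ∈ ℝⁿ, and for all x ∈ 𝕏 the (n+1)×n matrix obtained by stacking the Hessian H_{xx}(x) on top of the row vector H_x(x)ᵀ has rank n. Set v_k = J_k e for k = 1,…,N, assume r := rank[v₁ … v_N] ≥ 1 and (after reordering) that v₁,…,v_r are linearly independent, and define f : 𝕏 → ℝʳ by f(x) = [v₁ … v_r]ᵀ H_x(x). Then 𝒯 = f⁻¹({0}), and for every x₀ ∈ 𝕏 with f(x₀) = 0 the derivative Df(x₀) = [v₁ … v_r]ᵀ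 H_{xx}(x₀) : ℝⁿ → ℝʳ is surjective, i.e., 0 is a regular value of f. -/
open Set Matrix

/-- A matrix with full column rank has trivial kernel. -/
lemma eq_zero_of_mulVec_eq_zero {m n : ℕ} (T : Matrix (Fin m) (Fin n) ℝ)
    (h : T.rank = n) {u : Fin n → ℝ} (hu : T *ᵥ u = 0) : u = 0 := by
  have h1 := LinearMap.finrank_range_add_finrank_ker T.mulVecLin
  rw [Matrix.rank] at h
  rw [h] at h1
  simp only [Module.finrank_pi, Fintype.card_fin] at h1
  have hker : LinearMap.ker T.mulVecLin = ⊥ := by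
    have : Module.finrank ℝ (LinearMap.ker T.mulVecLin) = 0 := by omega
    exact Submodule.finrank_eq_zero.mp this
  have : u ∈ LinearMap.ker T.mulVecLin := by
    simpa [Matrix.mulVecLin] using hu
  rw [hker] at this
  simpa using this

/-- A matrix with full row rank gives a surjective `mulVec`. -/
lemma surjective_of_rank_rows {m n : ℕ} (M : Matrix (Fin m) (Fin n) ℝ)
    (h : M.rank = m) : Function.Surjective M.mulVec := by
  have : LinearMap.range M.mulVecLin = ⊤ := by
    apply Submodule.eq_top_of_finrank_eq
    rw [← Matrix.rank, h]
    simp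
  exact LinearMap.range_eq_top.mp this

/-- The dual pairing as a continuous linear map on Euclidean space. -/
noncomputable def dualCLM (n : ℕ) :
    EuclideanSpace ℝ (Fin n) →L[ℝ] (EuclideanSpace ℝ (Fin n) →L[ℝ] ℝ) :=
  LinearMap.toContinuousLinearMap
  { toFun := fun u => InnerProductSpace.toDual ℝ (EuclideanSpace ℝ (Fin n)) u
    map_add' := by intro a b; ext w; simp [inner_add_left]
    map_smul' := by intro c a; ext w; simp [real_inner_smul_left] }

/-- Symmetry of the Hessian (Clairaut/Schwarz). -/
lemma hessian_symm {n : ℕ} (X : Set (EuclideanSpace ℝ (Fin n))) (hXopen : IsOpen X)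
    (H : EuclideanSpace ℝ (Fin n) → ℝ)
    (Hx : EuclideanSpace ℝ (Fin n) → EuclideanSpace ℝ (Fin n))
    (Hxx : EuclideanSpace ℝ (Fin n) → Matrix (Fin n) (Fin n) ℝ)
    (hH : ∀ p ∈ X, HasGradientAt H (Hx p) p)
    (hHx : ∀ p ∈ X,
      HasFDerivAt Hx (LinearMap.toContinuousLinearMap (Matrix.toEuclideanLin (Hxx p))) p)
    (x₀ : EuclideanSpace ℝ (Fin n)) (hx₀ : x₀ ∈ X) :
    (Hxx x₀)ᵀ = Hxx x₀ := by
  set D := LinearMap.toContinuousLinearMap (Matrix.toEuclideanLin (Hxx x₀)) with hD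
  have hf : ∀ᶠ y in nhds x₀,
      HasFDerivAt H (InnerProductSpace.toDual ℝ (EuclideanSpace ℝ (Fin n)) (Hx y)) y := by
    filter_upwards [hXopen.mem_nhds hx₀] with y hy
    exact hasGradientAt_iff_hasFDerivAt.mp (hH y hy)
  have hx : HasFDerivAt
      (fun y => InnerProductSpace.toDual ℝ (EuclideanSpace ℝ (Fin n)) (Hx y))
      ((dualCLM n).comp D) x₀ :=
    (dualCLM n).hasFDerivAt.comp x₀ (hHx x₀ hx₀)
  have hsym := second_derivative_symmetric_of_eventually hf hx
  ext i j
  have h2 := hsym (EuclideanSpace.single j 1) (EuclideanSpace.single i 1)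
  simp only [ContinuousLinearMap.comp_apply, dualCLM, LinearMap.coe_toContinuousLinearMap',
    LinearMap.coe_mk, AddHom.coe_mk, InnerProductSpace.toDual_apply_apply, PiLp.inner_apply,
    RCLike.inner_apply, starRingEnd_apply, star_trivial] at h2
  have key : ∀ (a b : Fin n),
      (D (EuclideanSpace.single a 1) : EuclideanSpace ℝ (Fin n)) b = Hxx x₀ b a := by
    intro a b
    show ((Hxx x₀) *ᵥ (fun j => EuclideanSpace.single a (1:ℝ) j)) b = _
    have : (fun j => EuclideanSpace.single a (1:ℝ) j) = Pi.single a 1 := by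
      ext j; simp [EuclideanSpace.single_apply, Pi.single_apply]
    rw [this, Matrix.mulVec_single]
    simp
  simp only [key] at h2
  simp only [EuclideanSpace.single_apply] at h2
  simp only [Finset.sum_ite_eq', Finset.mem_univ, if_true, mul_one, mul_ite, mul_zero, ite_mul, one_mul, zero_mul,
    Finset.sum_ite_eq] at h2
  simpa [Matrix.transpose_apply] using h2.symm

/-- Under the rank condition on the stacked matrix `[H_{xx}(x); H_x(x)ᵀ]`, with
`S(x) = eᵀx`, `v_k = J_k e`, `r = rank[v₁ … v_N] ≥ 1` and `v₁,…,v_r` linearly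
independent, the set of thermodynamic equilibria equals `f⁻¹({0})` for
`f(x) = [v₁ … v_r]ᵀ H_x(x)`, and `0` is a regular value of `f`: at every zero `x₀`
of `f` in `𝕏`, the derivative `Df(x₀) = [v₁ … v_r]ᵀ H_{xx}(x₀)` is surjective. -/
theorem equilibria_regular_value
    (n N : ℕ)
    (X : Set (EuclideanSpace ℝ (Fin n))) (hXopen : IsOpen X)
    -- H is C² on X, with gradient Hx and Hessian Hxx
    (H : EuclideanSpace ℝ (Fin n) → ℝ)
    (Hx : EuclideanSpace ℝ (Fin n) → EuclideanSpace ℝ (Fin n))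
    (Hxx : EuclideanSpace ℝ (Fin n) → Matrix (Fin n) (Fin n) ℝ)
    (hH : ∀ p ∈ X, HasGradientAt H (Hx p) p)
    (hHx : ∀ p ∈ X,
      HasFDerivAt Hx (LinearMap.toContinuousLinearMap (Matrix.toEuclideanLin (Hxx p))) p)
    (hHxxcont : ContinuousOn Hxx X)
    -- the entropy is S(x) = eᵀ x
    (e : EuclideanSpace ℝ (Fin n))
    -- skew-symmetric structure matrices
    (J : Fin N → Matrix (Fin n) (Fin n) ℝ)
    (hJskew : ∀ k, (J k)ᵀ = -(J k))
    -- rank condition: the (n+1)×n matrix [H_{xx}(x); H_x(x)ᵀ] has rank n on X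
    (hrank : ∀ p ∈ X,
      (Matrix.of (Fin.snoc (fun i : Fin n => Hxx p i) (fun j : Fin n => Hx p j)) :
        Matrix (Fin (n+1)) (Fin n) ℝ).rank = n)
    -- v_k = J_k e, r = rank[v₁ … v_N] ≥ 1, v₁,…,v_r linearly independent
    (v : Fin N → (Fin n → ℝ))
    (hv : ∀ k, v k = (J k).mulVec (fun i => e i))
    (r : ℕ) (hr1 : 1 ≤ r) (hrN : r ≤ N)
    (hrankv : (Matrix.of (fun (i : Fin n) (k : Fin N) => v k i) :
        Matrix (Fin n) (Fin N) ℝ).rank = r)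
    (hli : LinearIndependent ℝ (fun k : Fin r => v (Fin.castLE hrN k))) :
    -- 𝒯 = f⁻¹({0}) for f(x) = [v₁ … v_r]ᵀ H_x(x)
    ({p ∈ X | ∀ k, (inner ℝ e (mv (J k) (Hx p)) : ℝ) = 0}
      = {p ∈ X | (fun k : Fin r => v (Fin.castLE hrN k) ⬝ᵥ (fun j => Hx p j)) = 0})
    -- 0 is a regular value of f: Df(x₀) = [v₁ … v_r]ᵀ H_{xx}(x₀) is surjective at zeros of f
    ∧ (∀ x₀ ∈ X,
        (fun k : Fin r => v (Fin.castLE hrN k) ⬝ᵥ (fun j => Hx x₀ j)) = 0 →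
        Function.Surjective
          (fun (w : Fin n → ℝ) (k : Fin r) =>
            v (Fin.castLE hrN k) ⬝ᵥ (Hxx x₀).mulVec w)) := by
  -- the inner product in the definition of 𝒯 is `-(v k ⬝ᵥ Hx p)`
  have hinner : ∀ (k : Fin N) (p : EuclideanSpace ℝ (Fin n)),
      (inner ℝ e (mv (J k) (Hx p)) : ℝ) = -(v k ⬝ᵥ fun j => Hx p j) := by
    intro k p
    have h1 : (inner ℝ e (mv (J k) (Hx p)) : ℝ)
        = (fun i => e i) ⬝ᵥ ((J k) *ᵥ fun j => Hx p j) := by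
      rw [PiLp.inner_apply]
      simp only [RCLike.inner_apply, starRingEnd_apply, star_trivial]
      exact Finset.sum_congr rfl fun i _ => mul_comm _ _
    rw [h1, Matrix.dotProduct_mulVec, ← Matrix.mulVec_transpose, hJskew k,
      Matrix.neg_mulVec, ← hv k, neg_dotProduct]
  -- every `v k` lies in the span of the first `r` of them
  have hspan : ∀ k : Fin N,
      v k ∈ Submodule.span ℝ (Set.range (fun j : Fin r => v (Fin.castLE hrN j))) := by
    intro k
    set W := Submodule.span ℝ (Set.range (fun j : Fin r => v (Fin.castLE hrN j))) with hW
    set U := Submodule.span ℝ (Set.range v) with hU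
    have hle : W ≤ U := Submodule.span_mono (by rintro _ ⟨j, rfl⟩; exact ⟨_, rfl⟩)
    have hfinU : Module.finrank ℝ U = r := by
      have := (Matrix.of (fun (i : Fin n) (k : Fin N) => v k i) :
          Matrix (Fin n) (Fin N) ℝ).rank_eq_finrank_span_cols
      rw [hrankv] at this
      have hT : Set.range (Matrix.of (fun (i : Fin n) (k : Fin N) => v k i)).col
          = Set.range v := by
        congr 1
      rw [hT] at this
      exact this.symm
    have hfinW : Module.finrank ℝ W = r := by
      rw [hW, finrank_span_eq_card hli, Fintype.card_fin]
    have hWU : W = U := Submodule.eq_of_le_of_finrank_le hle (by rw [hfinU, hfinW])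
    rw [hWU, hU]
    exact Submodule.subset_span ⟨k, rfl⟩
  constructor
  · -- set equality
    ext p
    simp only [Set.mem_setOf_eq]
    constructor
    · rintro ⟨hpX, hall⟩
      refine ⟨hpX, ?_⟩
      funext k
      have := hall (Fin.castLE hrN k)
      rw [hinner] at this
      simpa using (neg_eq_zero.mp this)
    · rintro ⟨hpX, hzero⟩
      refine ⟨hpX, ?_⟩
      intro k
      rw [hinner]
      have hvk := hspan k
      have : v k ⬝ᵥ (fun j => Hx p j) = 0 := by
        refine Submodule.span_induction ?_ ?_ ?_ ?_ hvk
        · rintro _ ⟨j, rfl⟩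
          exact congrFun hzero j
        · simp
        · intro a b _ _ ha hb
          simp [add_dotProduct, ha, hb]
        · intro c a _ ha
          simp [smul_dotProduct, ha]
      simp [this]
  · -- regular value
    intro x₀ hx₀ hf0
    have hA : (Hxx x₀)ᵀ = Hxx x₀ := hessian_symm X hXopen H Hx Hxx hH hHx x₀ hx₀
    set A := Hxx x₀ with hAdef
    set V : Matrix (Fin r) (Fin n) ℝ := Matrix.of (fun k : Fin r => v (Fin.castLE hrN k))
      with hV
    have hgoal : (fun (w : Fin n → ℝ) (k : Fin r) =>
        v (Fin.castLE hrN k) ⬝ᵥ A *ᵥ w) = (V * A).mulVec := by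
      funext w
      rw [← Matrix.mulVec_mulVec]
      rfl
    rw [hgoal]
    -- rows of V * A are linearly independent
    have hrows : LinearIndependent ℝ (fun k : Fin r => (V * A) k) := by
      rw [Fintype.linearIndependent_iff]
      intro c hc
      set u : Fin n → ℝ := c ᵥ* V with hu
      have hcM : c ᵥ* (V * A) = 0 := by
        funext j
        have := congrFun hc j
        simpa [Matrix.vecMul, dotProduct, Finset.sum_apply] using this
      have hAu : A *ᵥ u = 0 := by
        have h1 : u ᵥ* A = 0 := by
          rw [hu, Matrix.vecMul_vecMul, hcM]
        calc A *ᵥ u = u ᵥ* Aᵀ := (Matrix.vecMul_transpose A u).symm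
          _ = u ᵥ* A := by rw [hA]
          _ = 0 := h1
      have hgu : u ⬝ᵥ (fun j => Hx x₀ j) = 0 := by
        rw [hu, ← Matrix.dotProduct_mulVec]
        have hVg : V *ᵥ (fun j => Hx x₀ j) = 0 := hf0
        rw [hVg]
        simp
      have hTu : (Matrix.of (Fin.snoc (fun i : Fin n => Hxx x₀ i) (fun j : Fin n => Hx x₀ j)) :
          Matrix (Fin (n+1)) (Fin n) ℝ) *ᵥ u = 0 := by
        set T : Matrix (Fin (n+1)) (Fin n) ℝ :=
          Matrix.of (Fin.snoc (fun i : Fin n => Hxx x₀ i) (fun j : Fin n => Hx x₀ j)) with hT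
        have hlast : T (Fin.last n) = fun j => Hx x₀ j := by
          funext j; rw [hT]; simp [Fin.snoc_last]
        have hcast : ∀ i : Fin n, T (Fin.castSucc i) = Hxx x₀ i := by
          intro i; funext j; rw [hT]; simp [Fin.snoc_castSucc]
        funext i
        rw [Pi.zero_apply]
        have happ : (T *ᵥ u) i = T i ⬝ᵥ u := rfl
        rw [happ]
        refine Fin.lastCases ?_ ?_ i
        · rw [hlast, dotProduct_comm]
          exact hgu
        · intro i
          rw [hcast i]
          exact congrFun hAu i
      have hu0 : u = 0 := eq_zero_of_mulVec_eq_zero _ (hrank x₀ hx₀) hTu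
      have hsum : ∑ k : Fin r, c k • v (Fin.castLE hrN k) = 0 := by
        have : (∑ k : Fin r, c k • v (Fin.castLE hrN k)) = u := by
          funext i
          simp [hu, Matrix.vecMul, dotProduct, Finset.sum_apply, hV]
        rw [this, hu0]
      exact Fintype.linearIndependent_iff.mp hli c hsum
    have hrk : (V * A).rank = r := by
      simpa using hrows.rank_matrix
    exact surjective_of_rank_rows (V * A) hrk
end

section
/- Let x : [0, t_f] → 𝕏 be a continuously differentiable solution of the RIPHS state equation ẋ = (J₀(x) + Σ_{k=1}^N γ_k(x) {S,H}_{J_k}(x) J_k) H_x(x) + g(x) u with continuous control u, and let V ∈ ℝ^{n×n} be invertible. Define z(t) = V x(t), H̃(z) = H(V⁻¹z), S̃(z) = S(V⁻¹z), J̃₀(z) = V J₀(V⁻¹z) Vᵀ, J̃_k = V J_k Vᵀ, γ̃_k(z) = γ_k(V⁻¹z), and g̃(z) = V g(V⁻¹z). Then the gradients satisfy H̃_z(z) = V⁻ᵀ H_x(V⁻¹z) and S̃_z(z) = V⁻ᵀ S_x(V⁻¹z), each J̃_k is skew-symmetric, S̃ is a Casimir of J̃₀ (i.e., J̃₀(z)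 S̃_z(z) = 0), and z solves the transformed RIPHS ż = (J̃₀(z) + Σ_{k=1}^N γ̃_k(z) {S̃,H̃}_{J̃_k}(z) J̃_k) H̃_z(z) + g̃(z) u. -/
open Set Matrix

namespace RIPHSaux

variable {a b c : ℕ}

noncomputable def mvCLM (A : Matrix (Fin a) (Fin b) ℝ) :
    EuclideanSpace ℝ (Fin b) →L[ℝ] EuclideanSpace ℝ (Fin a) :=
  LinearMap.toContinuousLinearMap (Matrix.toEuclideanLin A)

@[simp] lemma mvCLM_apply (A : Matrix (Fin a) (Fin b) ℝ) (x) : mvCLM A x = mv A x := rfl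

lemma mv_mul (A : Matrix (Fin a) (Fin b) ℝ) (B : Matrix (Fin b) (Fin c) ℝ)
    (x : EuclideanSpace ℝ (Fin c)) : mv (A * B) x = mv A (mv B x) := by
  simp [mv, Matrix.toEuclideanLin_apply, Matrix.mulVec_mulVec]

@[simp] lemma mv_one (x : EuclideanSpace ℝ (Fin a)) : mv (1 : Matrix (Fin a) (Fin a) ℝ) x = x := by
  simp [mv, Matrix.toEuclideanLin_apply]

lemma inner_mv (A : Matrix (Fin a) (Fin b) ℝ) (s : EuclideanSpace ℝ (Fin a))
    (v : EuclideanSpace ℝ (Fin b)) :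
    (inner ℝ (mv Aᵀ s) v : ℝ) = inner ℝ s (mv A v) := by
  simp only [mv, Matrix.toEuclideanLin_apply, PiLp.inner_apply, RCLike.inner_apply,
    starRingEnd_apply, star_trivial]
  have : ∀ (w : Fin b → ℝ) (y : Fin b → ℝ), (∑ i, w i * y i) = w ⬝ᵥ y := fun _ _ => rfl
  calc (∑ i, v.ofLp i * (Aᵀ *ᵥ s.ofLp) i)
      = (Aᵀ *ᵥ s.ofLp) ⬝ᵥ v.ofLp := by simp only [dotProduct, mul_comm]
    _ = (s.ofLp ᵥ* A) ⬝ᵥ v.ofLp := by rw [Matrix.mulVec_transpose]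
    _ = s.ofLp ⬝ᵥ (A *ᵥ v.ofLp) := by rw [Matrix.dotProduct_mulVec]
    _ = _ := by simp only [dotProduct, mul_comm]

variable {n : ℕ} {V : Matrix (Fin n) (Fin n) ℝ}

lemma mv_inv_mv (hV : IsUnit V.det) (x : EuclideanSpace ℝ (Fin n)) :
    mv V⁻¹ (mv V x) = x := by
  rw [← mv_mul, Matrix.nonsing_inv_mul V hV, mv_one]

lemma mvT_mvinvT (hV : IsUnit V.det) (x : EuclideanSpace ℝ (Fin n)) :
    mv Vᵀ (mv V⁻¹ᵀ x) = x := by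
  rw [← mv_mul, ← Matrix.transpose_mul, Matrix.nonsing_inv_mul V hV, Matrix.transpose_one, mv_one]

lemma key (hV : IsUnit V.det) (A : Matrix (Fin n) (Fin n) ℝ) (w : EuclideanSpace ℝ (Fin n)) :
    mv (V * A * Vᵀ) (mv V⁻¹ᵀ w) = mv V (mv A w) := by
  rw [mv_mul, mv_mul, mvT_mvinvT hV]

lemma inner_transf (hV : IsUnit V.det) (s : EuclideanSpace ℝ (Fin n))
    (w : EuclideanSpace ℝ (Fin n)) :
    (inner ℝ (mv V⁻¹ᵀ s) (mv V w) : ℝ) = inner ℝ s w := by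
  rw [inner_mv, mv_inv_mv hV]

lemma bracket_transf (hV : IsUnit V.det) (J : Matrix (Fin n) (Fin n) ℝ)
    (s h : EuclideanSpace ℝ (Fin n)) :
    bracket (V * J * Vᵀ) (mv V⁻¹ᵀ s) (mv V⁻¹ᵀ h) = bracket J s h := by
  rw [bracket, key hV, inner_transf hV, bracket]

open InnerProductSpace in
lemma gradient_transf (hV : IsUnit V.det) {f : EuclideanSpace ℝ (Fin n) → ℝ}
    {fx : EuclideanSpace ℝ (Fin n)} {p : EuclideanSpace ℝ (Fin n)}
    (hf : HasGradientAt f fx p) :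
    HasGradientAt (fun w => f (mv V⁻¹ w)) (mv V⁻¹ᵀ fx) (mv V p) := by
  rw [hasGradientAt_iff_hasFDerivAt]
  have h1 : HasFDerivAt f (toDual ℝ _ fx) p := hf.hasFDerivAt
  have h2 : HasFDerivAt (fun w => f (mvCLM V⁻¹ w))
      ((toDual ℝ _ fx).comp (mvCLM V⁻¹)) (mv V p) := by
    apply HasFDerivAt.comp
    · simpa [mv_inv_mv hV] using h1
    · exact (mvCLM V⁻¹).hasFDerivAt
  have h3 : (toDual ℝ (EuclideanSpace ℝ (Fin n)) fx).comp (mvCLM V⁻¹)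
      = toDual ℝ _ (mv V⁻¹ᵀ fx) := by
    ext v
    simp only [ContinuousLinearMap.comp_apply, toDual_apply_apply, mvCLM_apply]
    exact (inner_mv V⁻¹ fx v).symm
  rw [← h3]
  exact h2


@[simp] lemma mv_zero (A : Matrix (Fin a) (Fin b) ℝ) :
    mv A (0 : EuclideanSpace ℝ (Fin b)) = 0 := map_zero (Matrix.toEuclideanLin A)

lemma mv_vadd (A : Matrix (Fin a) (Fin b) ℝ) (x y : EuclideanSpace ℝ (Fin b)) :
    mv A (x + y) = mv A x + mv A y := map_add (Matrix.toEuclideanLin A) x y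

end RIPHSaux

/-- The class of reversible-irreversible port-Hamiltonian systems is invariant
under invertible linear coordinate transforms `z = Vx`: with
`H̃(z) = H(V⁻¹z)`, `S̃(z) = S(V⁻¹z)`, `J̃₀(z) = V J₀(V⁻¹z) Vᵀ`, `J̃ₖ = V Jₖ Vᵀ`,
`γ̃ₖ(z) = γₖ(V⁻¹z)`, `g̃(z) = V g(V⁻¹z)`, the gradients satisfy
`H̃_z(z) = V⁻ᵀ H_x(V⁻¹z)` and `S̃_z(z) = V⁻ᵀ S_x(V⁻¹z)`, each `J̃ₖ` is
skew-symmetric, `S̃` is a Casimir of `J̃₀`, and `z = Vx` solves the transformed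
RIPHS. -/
theorem RIPHS_coordinate_transform
    (n N m : ℕ)
    (X : Set (EuclideanSpace ℝ (Fin n))) (hXopen : IsOpen X)
    (J0 : EuclideanSpace ℝ (Fin n) → Matrix (Fin n) (Fin n) ℝ)
    (hJ0cont : ContinuousOn J0 X)
    (hJ0skew : ∀ p ∈ X, (J0 p)ᵀ = -(J0 p))
    (H : EuclideanSpace ℝ (Fin n) → ℝ)
    (Hx : EuclideanSpace ℝ (Fin n) → EuclideanSpace ℝ (Fin n))
    (hH : ∀ p ∈ X, HasGradientAt H (Hx p) p)
    (hHxcont : ContinuousOn Hx X)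
    (S : EuclideanSpace ℝ (Fin n) → ℝ)
    (Sx : EuclideanSpace ℝ (Fin n) → EuclideanSpace ℝ (Fin n))
    (hS : ∀ p ∈ X, HasGradientAt S (Sx p) p)
    (hSxcont : ContinuousOn Sx X)
    (hCasimir : ∀ p ∈ X, mv (J0 p) (Sx p) = 0)
    (J : Fin N → Matrix (Fin n) (Fin n) ℝ)
    (hJskew : ∀ k, (J k)ᵀ = -(J k))
    (γ : Fin N → EuclideanSpace ℝ (Fin n) → ℝ)
    (hγpos : ∀ k, ∀ p ∈ X, 0 < γ k p)
    (hγcont : ∀ k, ContinuousOn (γ k) X)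
    (g : EuclideanSpace ℝ (Fin n) → Matrix (Fin n) (Fin m) ℝ)
    (hgcont : ContinuousOn g X)
    -- a continuously differentiable solution x on [0, t_f] with continuous control u
    (tf : ℝ) (htf : 0 ≤ tf)
    (x : ℝ → EuclideanSpace ℝ (Fin n))
    (u : ℝ → EuclideanSpace ℝ (Fin m))
    (hu : ContinuousOn u (Icc 0 tf))
    (hxmem : ∀ t ∈ Icc 0 tf, x t ∈ X)
    (x' : ℝ → EuclideanSpace ℝ (Fin n))
    (hx'cont : ContinuousOn x' (Icc 0 tf))
    (hxdiff : ∀ t ∈ Icc 0 tf, HasDerivWithinAt x (x' t) (Icc 0 tf) t)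
    (hdyn : ∀ t ∈ Icc 0 tf,
      x' t =
        mv (J0 (x t) + ∑ k, (γ k (x t) * bracket (J k) (Sx (x t)) (Hx (x t))) • J k)
           (Hx (x t))
        + mv (g (x t)) (u t))
    -- an invertible coordinate transformation V
    (V : Matrix (Fin n) (Fin n) ℝ) (hV : IsUnit V.det) :
    -- the gradient of H̃(z) = H(V⁻¹ z) is V⁻ᵀ H_x(V⁻¹ z) on V(𝕏)
    (∀ z ∈ (fun p => mv V p) '' X,
      HasGradientAt (fun w => H (mv V⁻¹ w)) (mv V⁻¹ᵀ (Hx (mv V⁻¹ z))) z)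
    -- the gradient of S̃(z) = S(V⁻¹ z) is V⁻ᵀ S_x(V⁻¹ z) on V(𝕏)
    ∧ (∀ z ∈ (fun p => mv V p) '' X,
      HasGradientAt (fun w => S (mv V⁻¹ w)) (mv V⁻¹ᵀ (Sx (mv V⁻¹ z))) z)
    -- each J̃ₖ = V Jₖ Vᵀ is skew-symmetric
    ∧ (∀ k, (V * J k * Vᵀ)ᵀ = -(V * J k * Vᵀ))
    -- S̃ is a Casimir of J̃₀: J̃₀(z) S̃_z(z) = 0 on V(𝕏)
    ∧ (∀ z ∈ (fun p => mv V p) '' X,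
        mv (V * J0 (mv V⁻¹ z) * Vᵀ) (mv V⁻¹ᵀ (Sx (mv V⁻¹ z))) = 0)
    -- z = Vx solves the transformed RIPHS
    ∧ (∀ t ∈ Icc 0 tf,
        HasDerivWithinAt (fun s => mv V (x s))
          (mv (V * J0 (x t) * Vᵀ
                + ∑ k, (γ k (x t) *
                    bracket (V * J k * Vᵀ) (mv V⁻¹ᵀ (Sx (x t))) (mv V⁻¹ᵀ (Hx (x t)))) •
                      (V * J k * Vᵀ))
              (mv V⁻¹ᵀ (Hx (x t)))
            + mv (V * g (x t)) (u t))
          (Icc 0 tf) t) := by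
  open RIPHSaux in
  refine ⟨?_, ?_, ?_, ?_, ?_⟩
  · rintro z ⟨p, hp, rfl⟩
    simp only [mv_inv_mv hV]
    exact gradient_transf hV (hH p hp)
  · rintro z ⟨p, hp, rfl⟩
    simp only [mv_inv_mv hV]
    exact gradient_transf hV (hS p hp)
  · intro k
    simp [Matrix.transpose_mul, hJskew k, Matrix.mul_assoc, Matrix.neg_mul, Matrix.mul_neg]
  · rintro z ⟨p, hp, rfl⟩
    rw [mv_inv_mv hV, key hV, hCasimir p hp, mv_zero]
  · intro t ht
    have hder : HasDerivWithinAt (fun s => mv V (x s)) (mv V (x' t)) (Icc 0 tf) t :=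
      (mvCLM V).hasFDerivAt.comp_hasDerivWithinAt t (hxdiff t ht)
    have hmat : V * J0 (x t) * Vᵀ
        + ∑ k, (γ k (x t) * bracket (J k) (Sx (x t)) (Hx (x t))) • (V * J k * Vᵀ)
        = V * (J0 (x t) + ∑ k, (γ k (x t) * bracket (J k) (Sx (x t)) (Hx (x t))) • J k) * Vᵀ := by
      simp [Matrix.mul_add, Matrix.add_mul, Finset.mul_sum, Finset.sum_mul,
        Matrix.mul_smul, Matrix.smul_mul]
    have heq : mv (V * J0 (x t) * Vᵀ
          + ∑ k, (γ k (x t) *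
              bracket (V * J k * Vᵀ) (mv V⁻¹ᵀ (Sx (x t))) (mv V⁻¹ᵀ (Hx (x t)))) •
                (V * J k * Vᵀ))
          (mv V⁻¹ᵀ (Hx (x t)))
        + mv (V * g (x t)) (u t) = mv V (x' t) := by
      simp_rw [bracket_transf hV]
      rw [hmat, key hV, mv_mul V (g (x t)), ← mv_vadd, ← hdyn t ht]
    rw [heq]
    exact hder
end

section
/- Let α₁, α₂ > 0 and T₀ > 0, and define the stage cost ℓ(x,u) = (α₁ g(x)ᵀH_x(x) − α₂ T₀ g(x)ᵀS_x(x))ᵀ u. If (x̄, ū) ∈ 𝕏 × ℝ^m is a steady state of the RIPHS, i.e., (J₀(x̄) + Σ_{k=1}^N γ_k(x̄) {S,H}_{J_k}(x̄) J_k) H_x(x̄) + g(x̄) ū = 0, then ℓ(x̄, ū) = α₂ T₀ · Σ_{k=1}^N γ_k(x̄) · ({S,H}_{J_k}(x̄))² ≥ 0. -/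
open Set Matrix

/-- The stage cost `ℓ(x,u) = (α₁ g(x)ᵀH_x(x) − α₂T₀ g(x)ᵀS_x(x))ᵀ u`. -/
noncomputable def stageCost {n m : ℕ} (α₁ α₂ T₀ : ℝ)
    (g : EuclideanSpace ℝ (Fin n) → Matrix (Fin n) (Fin m) ℝ)
    (Hx Sx : EuclideanSpace ℝ (Fin n) → EuclideanSpace ℝ (Fin n))
    (p : EuclideanSpace ℝ (Fin n)) (w : EuclideanSpace ℝ (Fin m)) : ℝ :=
  inner ℝ (α₁ • mv (g p)ᵀ (Hx p) - (α₂ * T₀) • mv (g p)ᵀ (Sx p)) w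


lemma mv_apply {a b : ℕ} (A : Matrix (Fin a) (Fin b) ℝ) (x : EuclideanSpace ℝ (Fin b)) (i : Fin a) :
    mv A x i = (A *ᵥ (x : Fin b → ℝ)) i := rfl

lemma inner_mv {a b : ℕ} (A : Matrix (Fin a) (Fin b) ℝ) (x : EuclideanSpace ℝ (Fin b)) (y : EuclideanSpace ℝ (Fin a)) :
    (inner ℝ y (mv A x) : ℝ) = (y : Fin a → ℝ) ⬝ᵥ (A *ᵥ (x : Fin b → ℝ)) := by
  simp [PiLp.inner_apply, mv_apply, dotProduct, mul_comm]

lemma skew_dot {n : ℕ} (A : Matrix (Fin n) (Fin n) ℝ) (h : Aᵀ = -A) (x : Fin n → ℝ) :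
    x ⬝ᵥ A *ᵥ x = 0 := by
  have h1 : x ⬝ᵥ A *ᵥ x = (Aᵀ *ᵥ x) ⬝ᵥ x := by
    rw [Matrix.dotProduct_mulVec, Matrix.mulVec_transpose]
  rw [h, Matrix.neg_mulVec, neg_dotProduct] at h1
  have h2 := dotProduct_comm (A *ᵥ x) x
  linarith

lemma sum_mulVec' {ι : Type*} (s : Finset ι) {a c : ℕ} (f : ι → Matrix (Fin a) (Fin c) ℝ)
    (x : Fin c → ℝ) : (∑ k ∈ s, f k) *ᵥ x = ∑ k ∈ s, (f k) *ᵥ x := by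
  induction s using Finset.cons_induction with
  | empty => simp [Matrix.zero_mulVec]
  | cons k s hk ih => simp [Finset.sum_cons, Matrix.add_mulVec, ih]

lemma dotProduct_sum' {ι : Type*} (s : Finset ι) {a : ℕ} (v : Fin a → ℝ)
    (f : ι → Fin a → ℝ) : v ⬝ᵥ (∑ k ∈ s, f k) = ∑ k ∈ s, v ⬝ᵥ f k := by
  induction s using Finset.cons_induction with
  | empty => simp [dotProduct]
  | cons k s hk ih => simp [Finset.sum_cons, dotProduct_add, ih]

lemma inner_transpose_mv {a b : ℕ} (A : Matrix (Fin a) (Fin b) ℝ)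
    (v : EuclideanSpace ℝ (Fin a)) (u : EuclideanSpace ℝ (Fin b)) :
    (inner ℝ (mv Aᵀ v) u : ℝ) = (v : Fin a → ℝ) ⬝ᵥ (A *ᵥ (u : Fin b → ℝ)) := by
  rw [real_inner_comm, inner_mv, dotProduct_comm, Matrix.mulVec_transpose,
    ← Matrix.dotProduct_mulVec]

/-- At any steady state `(xbar, ubar)` of a RIPHS, the stage cost equals
`α₂T₀ Σ_k γ_k(xbar) ({S,H}_{J_k}(xbar))² ≥ 0`. -/
theorem steady_state_stage_cost
    (n N m : ℕ)
    (X : Set (EuclideanSpace ℝ (Fin n))) (hXopen : IsOpen X)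
    (J0 : EuclideanSpace ℝ (Fin n) → Matrix (Fin n) (Fin n) ℝ)
    (hJ0cont : ContinuousOn J0 X)
    (hJ0skew : ∀ p ∈ X, (J0 p)ᵀ = -(J0 p))
    (H : EuclideanSpace ℝ (Fin n) → ℝ)
    (Hx : EuclideanSpace ℝ (Fin n) → EuclideanSpace ℝ (Fin n))
    (hH : ∀ p ∈ X, HasGradientAt H (Hx p) p)
    (hHxcont : ContinuousOn Hx X)
    (S : EuclideanSpace ℝ (Fin n) → ℝ)
    (Sx : EuclideanSpace ℝ (Fin n) → EuclideanSpace ℝ (Fin n))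
    (hS : ∀ p ∈ X, HasGradientAt S (Sx p) p)
    (hSxcont : ContinuousOn Sx X)
    (hCasimir : ∀ p ∈ X, mv (J0 p) (Sx p) = 0)
    (J : Fin N → Matrix (Fin n) (Fin n) ℝ)
    (hJskew : ∀ k, (J k)ᵀ = -(J k))
    (γ : Fin N → EuclideanSpace ℝ (Fin n) → ℝ)
    (hγpos : ∀ k, ∀ p ∈ X, 0 < γ k p)
    (hγcont : ∀ k, ContinuousOn (γ k) X)
    (g : EuclideanSpace ℝ (Fin n) → Matrix (Fin n) (Fin m) ℝ)
    (hgcont : ContinuousOn g X)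
    (α₁ α₂ T₀ : ℝ) (hα₁ : 0 < α₁) (hα₂ : 0 < α₂) (hT₀ : 0 < T₀)
    -- (xbar, ubar) is a steady state of the RIPHS
    (xbar : EuclideanSpace ℝ (Fin n)) (hxbar : xbar ∈ X)
    (ubar : EuclideanSpace ℝ (Fin m))
    (hsteady :
      mv (J0 xbar + ∑ k, (γ k xbar * bracket (J k) (Sx xbar) (Hx xbar)) • J k) (Hx xbar)
        + mv (g xbar) ubar = 0) :
    stageCost α₁ α₂ T₀ g Hx Sx xbar ubar
        = α₂ * T₀ * ∑ k, γ k xbar * (bracket (J k) (Sx xbar) (Hx xbar))^2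
    ∧ 0 ≤ α₂ * T₀ * ∑ k, γ k xbar * (bracket (J k) (Sx xbar) (Hx xbar))^2 := by
  unfold stageCost
  set b : Fin N → ℝ := fun k => bracket (J k) (Sx xbar) (Hx xbar) with hb
  set M : Matrix (Fin n) (Fin n) ℝ := J0 xbar + ∑ k, (γ k xbar * b k) • J k with hM
  have hg : mv (g xbar) ubar = -(mv M (Hx xbar)) := eq_neg_of_add_eq_zero_right hsteady
  have hgfun : (g xbar) *ᵥ (ubar : Fin m → ℝ) = -(M *ᵥ (Hx xbar : Fin n → ℝ)) := congrArg WithLp.ofLp hg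
  have hMskew : Mᵀ = -M := by
    rw [hM, Matrix.transpose_add, Matrix.transpose_sum]
    simp [Matrix.transpose_smul, hJskew, hJ0skew xbar hxbar, smul_neg, neg_add,
      Finset.sum_neg_distrib]
    abel
  have hHterm : (Hx xbar : Fin n → ℝ) ⬝ᵥ ((g xbar) *ᵥ (ubar : Fin m → ℝ)) = 0 := by
    rw [hgfun, dotProduct_neg, skew_dot M hMskew, neg_zero]
  have hCasfun : (J0 xbar) *ᵥ ((Sx xbar : Fin n → ℝ)) = 0 := congrArg WithLp.ofLp (hCasimir xbar hxbar)
  have hbk : ∀ k, (Sx xbar : Fin n → ℝ) ⬝ᵥ ((J k) *ᵥ (Hx xbar : Fin n → ℝ)) = b k := by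
    intro k; rw [hb]; exact (inner_mv _ _ _).symm
  have hSterm : (Sx xbar : Fin n → ℝ) ⬝ᵥ ((g xbar) *ᵥ (ubar : Fin m → ℝ))
      = -∑ k, γ k xbar * (b k)^2 := by
    rw [hgfun, dotProduct_neg, neg_inj.mpr ?_]
    rw [hM, Matrix.add_mulVec, dotProduct_add]
    have h0 : (Sx xbar : Fin n → ℝ) ⬝ᵥ ((J0 xbar) *ᵥ (Hx xbar : Fin n → ℝ)) = 0 := by
      rw [Matrix.dotProduct_mulVec, ← Matrix.mulVec_transpose, hJ0skew xbar hxbar,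
        Matrix.neg_mulVec, hCasfun, neg_zero, zero_dotProduct]
    rw [h0, zero_add, sum_mulVec', dotProduct_sum']
    refine Finset.sum_congr rfl fun k _ => ?_
    rw [Matrix.smul_mulVec, dotProduct_smul, smul_eq_mul, hbk k]
    ring
  rw [inner_sub_left, real_inner_smul_left, real_inner_smul_left,
    inner_transpose_mv, inner_transpose_mv, hHterm, hSterm]
  constructor
  · ring
  · refine mul_nonneg (mul_nonneg hα₂.le hT₀.le) (Finset.sum_nonneg fun k _ => ?_)
    exact mul_nonneg (hγpos k xbar hxbar).le (sq_nonneg _)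
end

section
/- Assume: H ∈ C²(𝕏, ℝ), the image 𝕐 := H_x(𝕏) is open in ℝⁿ, and H_x : 𝕏 → 𝕐 is a C¹-diffeomorphism; S(x) = eᵀx with e ∈ ℝⁿ \ {0}; γ_k : 𝕏 → (0,∞) are continuous for k = 1,…,N. Let V := ⋂_{k=1}^N (J_k e)^⊥ and assume V ∩ 𝕐 ≠ ∅. Then for every compact set K ⊆ 𝕏 there exists c > 0 such that for all x ∈ K: dist(x, 𝒯)² ≤ c · Σ_{k=1}^N γ_k(x) · ({S,H}_{J_k}(x))², where dist(x, 𝒯) = inf_{y ∈ 𝒯} ‖x − y‖. -/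
open Set Matrix Metric

lemma inner_mv_s9 {n : ℕ} (A : Matrix (Fin n) (Fin n) ℝ) (u v : EuclideanSpace ℝ (Fin n)) :
    (inner ℝ u (mv A v) : ℝ) = inner ℝ (mv Aᵀ u) v := by
  simp [mv, Matrix.toEuclideanLin_apply, PiLp.inner_apply, Matrix.mulVec, dotProduct,
    Finset.mul_sum, Finset.sum_mul]
  rw [Finset.sum_comm]
  simp [mul_comm, mul_left_comm, mul_assoc]

lemma mv_neg {n : ℕ} (A : Matrix (Fin n) (Fin n) ℝ) (v : EuclideanSpace ℝ (Fin n)) :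
    mv (-A) v = - mv A v := by
  simp [mv]

lemma proj_estimate {n N : ℕ} (v : Fin N → EuclideanSpace ℝ (Fin n)) :
    ∃ C > 0, ∀ y : EuclideanSpace ℝ (Fin n), ∃ y' : EuclideanSpace ℝ (Fin n),
      (∀ k, (inner ℝ (v k) y' : ℝ) = 0) ∧
      ‖y - y'‖ ^ 2 ≤ C * ∑ k, (inner ℝ (v k) y : ℝ) ^ 2 ∧
      ∀ z : EuclideanSpace ℝ (Fin n), (∀ k, (inner ℝ (v k) z : ℝ) = 0) → ‖y - y'‖ ≤ ‖y - z‖ := by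
  let Φ : EuclideanSpace ℝ (Fin n) →ₗ[ℝ] EuclideanSpace ℝ (Fin N) :=
    { toFun := fun y => WithLp.toLp 2 (fun k => (inner ℝ (v k) y : ℝ))
      map_add' := by intro a b; ext k; simp [inner_add_right]
      map_smul' := by intro c a; ext k; simp [inner_smul_right] }
  have hΦ : ∀ y k, Φ y k = (inner ℝ (v k) y : ℝ) := fun _ _ => rfl
  set V : Submodule ℝ (EuclideanSpace ℝ (Fin n)) := LinearMap.ker Φ with hV
  have hmemV : ∀ z : EuclideanSpace ℝ (Fin n), z ∈ V ↔ ∀ k, (inner ℝ (v k) z : ℝ) = 0 := by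
    intro z
    constructor
    · intro hz k; have := congrArg (fun w : EuclideanSpace ℝ (Fin N) => w k) (LinearMap.mem_ker.mp hz); simpa [hΦ] using this
    · intro hz; apply LinearMap.mem_ker.mpr; ext k; simp [hΦ, hz k]
  let ψ : Vᗮ →ₗ[ℝ] EuclideanSpace ℝ (Fin N) := Φ.comp Vᗮ.subtype
  have hψker : LinearMap.ker ψ = ⊥ := by
    rw [LinearMap.ker_eq_bot']
    intro a ha
    have haV : (a : EuclideanSpace ℝ (Fin n)) ∈ V := LinearMap.mem_ker.mpr ha
    have h0 : (inner ℝ (a : EuclideanSpace ℝ (Fin n)) (a : EuclideanSpace ℝ (Fin n)) : ℝ) = 0 :=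
      (Submodule.mem_orthogonal _ _).mp a.2 (a : EuclideanSpace ℝ (Fin n)) haV
    exact Subtype.ext (inner_self_eq_zero.mp h0)
  obtain ⟨C0, hC0, hanti⟩ := ψ.exists_antilipschitzWith hψker
  refine ⟨(C0 : ℝ) ^ 2, by positivity, fun y => ?_⟩
  set y' : EuclideanSpace ℝ (Fin n) := (V.orthogonalProjectionOnto y : EuclideanSpace ℝ (Fin n))
    with hy'
  have hy'V : y' ∈ V := (V.orthogonalProjectionOnto y).2
  have hwV : y - y' ∈ Vᗮ := V.sub_starProjection_mem_orthogonal y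
  have hΦw : Φ (y - y') = Φ y := by
    rw [map_sub, LinearMap.mem_ker.mp hy'V, sub_zero]
  have hnorm : ‖y - y'‖ ≤ C0 * ‖Φ y‖ := by
    have := hanti.le_mul_dist (⟨y - y', hwV⟩ : Vᗮ) 0
    simpa [ψ, dist_eq_norm, hΦw, Submodule.coe_norm] using this
  have hΦnorm : ‖Φ y‖ ^ 2 = ∑ k, (inner ℝ (v k) y : ℝ) ^ 2 := by
    rw [← real_inner_self_eq_norm_sq]
    rw [PiLp.inner_apply]
    simp [hΦ, pow_two]
  refine ⟨y', fun k => (hmemV y').mp hy'V k, ?_, ?_⟩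
  · calc ‖y - y'‖ ^ 2 ≤ (C0 * ‖Φ y‖) ^ 2 := by
          exact pow_le_pow_left₀ (norm_nonneg _) hnorm 2
      _ = (C0 : ℝ) ^ 2 * ∑ k, (inner ℝ (v k) y : ℝ) ^ 2 := by rw [mul_pow, hΦnorm]
  · intro z hz
    have hzV : z ∈ V := (hmemV z).mpr hz
    have horth : (inner ℝ (y - y') (y' - z) : ℝ) = 0 :=
      (Submodule.mem_orthogonal' _ _).mp hwV _ (Submodule.sub_mem V hy'V hzV)
    have hdecomp : ‖y - z‖ ^ 2 = ‖y - y'‖ ^ 2 + ‖y' - z‖ ^ 2 := by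
      have h : y - z = (y - y') + (y' - z) := by abel
      rw [h, norm_add_sq_real, horth]; ring
    have hsq : ‖y - y'‖ ^ 2 ≤ ‖y - z‖ ^ 2 := by nlinarith [sq_nonneg ‖y' - z‖]
    exact (pow_le_pow_iff_left₀ (norm_nonneg _) (norm_nonneg _) two_ne_zero).mp hsq

/-- Quantitative estimate of the distance to the set of thermodynamic equilibria:
if `H_x : 𝕏 → 𝕐` is a C¹-diffeomorphism onto the open set `𝕐 = H_x(𝕏)`,
`S(x) = eᵀx` with `e ≠ 0`, and `V = ⋂_k (J_k e)^⊥` meets `𝕐`, then on every compact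
`K ⊆ 𝕏` one has `dist(x,𝒯)² ≤ c Σ_k γ_k(x) ({S,H}_{J_k}(x))²`. -/
theorem dist_to_equilibria_sq_le
    (n N : ℕ)
    (X : Set (EuclideanSpace ℝ (Fin n))) (hXopen : IsOpen X)
    -- H ∈ C², with gradient Hx and Hessian Hxx
    (H : EuclideanSpace ℝ (Fin n) → ℝ)
    (Hx : EuclideanSpace ℝ (Fin n) → EuclideanSpace ℝ (Fin n))
    (Hxx : EuclideanSpace ℝ (Fin n) → Matrix (Fin n) (Fin n) ℝ)
    (hH : ∀ p ∈ X, HasGradientAt H (Hx p) p)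
    (hHx : ∀ p ∈ X,
      HasFDerivAt Hx (LinearMap.toContinuousLinearMap (Matrix.toEuclideanLin (Hxx p))) p)
    (hHxxcont : ContinuousOn Hxx X)
    -- 𝕐 = H_x(𝕏) is open and H_x : 𝕏 → 𝕐 is a C¹-diffeomorphism with inverse Hinv
    (hYopen : IsOpen (Hx '' X))
    (Hinv : EuclideanSpace ℝ (Fin n) → EuclideanSpace ℝ (Fin n))
    (hHinvmaps : ∀ y ∈ Hx '' X, Hinv y ∈ X)
    (hHinvleft : ∀ p ∈ X, Hinv (Hx p) = p)
    (hHinvC1 : ContDiffOn ℝ 1 Hinv (Hx '' X))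
    -- entropy S(x) = eᵀ x, e ≠ 0
    (e : EuclideanSpace ℝ (Fin n)) (he : e ≠ 0)
    -- skew-symmetric structure matrices and positive continuous γ_k
    (J : Fin N → Matrix (Fin n) (Fin n) ℝ)
    (hJskew : ∀ k, (J k)ᵀ = -(J k))
    (γ : Fin N → EuclideanSpace ℝ (Fin n) → ℝ)
    (hγpos : ∀ k, ∀ p ∈ X, 0 < γ k p)
    (hγcont : ∀ k, ContinuousOn (γ k) X)
    -- V = ⋂_k (J_k e)^⊥ meets 𝕐
    (hVY : ({y : EuclideanSpace ℝ (Fin n) | ∀ k, (inner ℝ y (mv (J k) e) : ℝ) = 0}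
        ∩ (Hx '' X)).Nonempty)
    -- the set of thermodynamic equilibria
    (T : Set (EuclideanSpace ℝ (Fin n)))
    (hT : T = {p ∈ X | ∀ k, (inner ℝ e (mv (J k) (Hx p)) : ℝ) = 0}) :
    ∀ K ⊆ X, IsCompact K → ∃ c > 0, ∀ x ∈ K,
      infDist x T ^ 2 ≤ c * ∑ k, γ k x * (inner ℝ e (mv (J k) (Hx x)) : ℝ) ^ 2 := by
  intro K hKX hK
  have hadj : ∀ (k : Fin N) (y : EuclideanSpace ℝ (Fin n)),
      (inner ℝ e (mv (J k) y) : ℝ) = - (inner ℝ (mv (J k) e) y : ℝ) := by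
    intro k y
    rw [inner_mv_s9, hJskew k, mv_neg, inner_neg_left]
  have hHxcont : ContinuousOn Hx X := fun p hp => ((hHx p hp).continuousAt).continuousWithinAt
  obtain ⟨C, hCpos, hC⟩ := proj_estimate (fun k => mv (J k) e)
  set f1 : EuclideanSpace ℝ (Fin n) → ℝ :=
    fun x => ∑ k, (inner ℝ e (mv (J k) (Hx x)) : ℝ) ^ 2 with hf1
  have hf1nonneg : ∀ x, 0 ≤ f1 x := fun x => Finset.sum_nonneg fun k _ => sq_nonneg _
  have hmvcont : ∀ A : Matrix (Fin n) (Fin n) ℝ, Continuous (mv A) := fun A =>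
    (Matrix.toEuclideanLin A).continuous_of_finiteDimensional
  have hf1cont : ContinuousOn f1 X := by
    apply continuousOn_finset_sum
    intro k _
    exact (continuousOn_const.inner ((hmvcont (J k)).comp_continuousOn hHxcont)).pow 2
  -- local estimate
  have key : ∀ x₀ : EuclideanSpace ℝ (Fin n), ∃ U : Set (EuclideanSpace ℝ (Fin n)), ∃ c : ℝ,
      U ∈ nhds x₀ ∧ (x₀ ∈ K → 0 < c ∧ ∀ x ∈ K ∩ U, infDist x T ^ 2 ≤ c * f1 x) := by
    intro x₀
    by_cases hx₀K : x₀ ∈ K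
    swap
    · exact ⟨univ, 1, Filter.univ_mem, fun h => absurd h hx₀K⟩
    have hx₀X : x₀ ∈ X := hKX hx₀K
    by_cases hx₀T : ∀ k, (inner ℝ e (mv (J k) (Hx x₀)) : ℝ) = 0
    · -- near the equilibrium set
      set y₀ := Hx x₀ with hy₀
      have hy₀Y : y₀ ∈ Hx '' X := ⟨x₀, hx₀X, rfl⟩
      obtain ⟨L, t, ht, hLip⟩ :=
        (hHinvC1.contDiffAt (hYopen.mem_nhds hy₀Y)).exists_lipschitzOnWith
      obtain ⟨ε, hεpos, hεsub⟩ :=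
        Metric.mem_nhds_iff.mp (Filter.inter_mem (hYopen.mem_nhds hy₀Y) ht)
      obtain ⟨r, hrpos, hrε⟩ : ∃ r : ℝ, 0 < r ∧ 3 * r ≤ ε := ⟨ε / 3, by positivity, by linarith⟩
      have hUopen : IsOpen (X ∩ Hx ⁻¹' Metric.ball y₀ r) :=
        hHxcont.isOpen_inter_preimage hXopen Metric.isOpen_ball
      refine ⟨X ∩ Hx ⁻¹' Metric.ball y₀ r, ((L : ℝ) ^ 2 + 1) * C,
        hUopen.mem_nhds ⟨hx₀X, by rw [Set.mem_preimage, Metric.mem_ball, ← hy₀, dist_self]; exact hrpos⟩,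
        fun _ => ⟨by positivity, ?_⟩⟩
      rintro x ⟨hxK, hxX, hxball⟩
      set y := Hx x with hy
      obtain ⟨y', hy'V, hy'close, hy'min⟩ := hC y
      have hy₀V : ∀ k, (inner ℝ (mv (J k) e) y₀ : ℝ) = 0 := fun k => by
        have h := hx₀T k; rw [hadj] at h; linarith
      have h1 : ‖y - y'‖ ≤ ‖y - y₀‖ := hy'min y₀ hy₀V
      have hyy₀ : ‖y - y₀‖ < r := by
        have h : y ∈ Metric.ball y₀ r := hxball
        rw [Metric.mem_ball, dist_eq_norm] at h; exact h
      have hyball : y ∈ Metric.ball y₀ ε := by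
        rw [Metric.mem_ball, dist_eq_norm]
        linarith
      have hy'ball : y' ∈ Metric.ball y₀ ε := by
        rw [Metric.mem_ball, dist_eq_norm]
        calc ‖y' - y₀‖ ≤ ‖y' - y‖ + ‖y - y₀‖ := norm_sub_le_norm_sub_add_norm_sub _ _ _
          _ = ‖y - y'‖ + ‖y - y₀‖ := by rw [norm_sub_rev]
          _ ≤ ‖y - y₀‖ + ‖y - y₀‖ := by linarith
          _ < ε := by linarith
      have hy'Y : y' ∈ Hx '' X := (hεsub hy'ball).1
      have hy't : y' ∈ t := (hεsub hy'ball).2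
      have hyt : y ∈ t := (hεsub hyball).2
      have hHxy' : Hx (Hinv y') = y' := by
        obtain ⟨p, hpX, hpy⟩ := hy'Y
        rw [← hpy, hHinvleft p hpX]
      have hx'T : Hinv y' ∈ T := by
        rw [hT]
        refine ⟨hHinvmaps _ hy'Y, fun k => ?_⟩
        rw [hHxy', hadj, hy'V k, neg_zero]
      have hd : infDist x T ≤ (L : ℝ) * ‖y - y'‖ := by
        calc infDist x T ≤ dist x (Hinv y') := infDist_le_dist_of_mem hx'T
          _ = dist (Hinv y) (Hinv y') := by rw [hHinvleft x hxX]
          _ ≤ (L : ℝ) * dist y y' := hLip.dist_le_mul y hyt y' hy't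
          _ = (L : ℝ) * ‖y - y'‖ := by rw [dist_eq_norm]
      have hsqeq : ∀ k, (inner ℝ (mv (J k) e) y : ℝ) ^ 2
          = (inner ℝ e (mv (J k) (Hx x)) : ℝ) ^ 2 := fun k => by
        rw [hadj]; ring
      calc infDist x T ^ 2 ≤ ((L : ℝ) * ‖y - y'‖) ^ 2 :=
            pow_le_pow_left₀ infDist_nonneg hd 2
        _ = (L : ℝ) ^ 2 * ‖y - y'‖ ^ 2 := by ring
        _ ≤ (L : ℝ) ^ 2 * (C * ∑ k, (inner ℝ ((fun k => mv (J k) e) k) y : ℝ) ^ 2) :=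
            mul_le_mul_of_nonneg_left hy'close (by positivity)
        _ = (L : ℝ) ^ 2 * C * f1 x := by
            rw [hf1]
            simp only [← hsqeq]
            ring
        _ ≤ ((L : ℝ) ^ 2 + 1) * C * f1 x := by
            have := hf1nonneg x
            nlinarith [sq_nonneg (L : ℝ), hCpos]
    · -- away from the equilibrium set
      have hf1pos : 0 < f1 x₀ := by
        obtain ⟨k, hk⟩ := not_forall.mp hx₀T
        exact Finset.sum_pos' (fun k _ => sq_nonneg _)
          ⟨k, Finset.mem_univ k, by positivity⟩
      set M := infDist x₀ T + 1 with hM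
      have hMpos : 0 < M := by
        have := @infDist_nonneg _ _ T x₀; rw [hM]; linarith
      have hUopen : IsOpen ((X ∩ f1 ⁻¹' Ioi (f1 x₀ / 2)) ∩ Metric.ball x₀ 1) :=
        (hf1cont.isOpen_inter_preimage hXopen isOpen_Ioi).inter Metric.isOpen_ball
      refine ⟨(X ∩ f1 ⁻¹' Ioi (f1 x₀ / 2)) ∩ Metric.ball x₀ 1, M ^ 2 * (2 / f1 x₀),
        hUopen.mem_nhds ⟨⟨hx₀X, by simp; linarith⟩, Metric.mem_ball_self one_pos⟩,
        fun _ => ⟨by positivity, ?_⟩⟩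
      rintro x ⟨hxK, ⟨⟨hxX, hxf⟩, hxb⟩⟩
      have hxf' : f1 x₀ / 2 < f1 x := hxf
      have h1 : infDist x T ≤ M := by
        calc infDist x T ≤ infDist x₀ T + dist x x₀ := infDist_le_infDist_add_dist
          _ ≤ infDist x₀ T + 1 := by
              have : dist x x₀ < 1 := Metric.mem_ball.mp hxb
              linarith
      calc infDist x T ^ 2 ≤ M ^ 2 := pow_le_pow_left₀ infDist_nonneg h1 2
        _ = M ^ 2 * (2 / f1 x₀) * (f1 x₀ / 2) := by field_simp
        _ ≤ M ^ 2 * (2 / f1 x₀) * f1 x := by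
            have hc : 0 < M ^ 2 * (2 / f1 x₀) := by positivity
            nlinarith
  choose U c hU hc using key
  obtain ⟨tset, htK, hcover⟩ := hK.elim_nhds_subcover U (fun x _ => hU x)
  set c1 := 1 + ∑ x ∈ tset, c x with hc1
  have hc1pos : 0 < c1 :=
    add_pos_of_pos_of_nonneg one_pos (Finset.sum_nonneg fun x hx => (hc x (htK x hx)).1.le)
  have hglobal1 : ∀ x ∈ K, infDist x T ^ 2 ≤ c1 * f1 x := by
    intro x hx
    obtain ⟨x₀, hx₀t, hxU⟩ := Set.mem_iUnion₂.mp (hcover hx)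
    have h2 := (hc x₀ (htK x₀ hx₀t)).2 x ⟨hx, hxU⟩
    refine h2.trans (mul_le_mul_of_nonneg_right ?_ (hf1nonneg x))
    have h3 : c x₀ ≤ ∑ x ∈ tset, c x :=
      Finset.single_le_sum (fun i hi => (hc i (htK i hi)).1.le) hx₀t
    rw [hc1]; linarith
  set G : EuclideanSpace ℝ (Fin n) → ℝ := fun x => ∑ k, (γ k x)⁻¹ with hG
  have hGcont : ContinuousOn G X :=
    continuousOn_finset_sum _ fun k _ => (hγcont k).inv₀ fun p hp => (hγpos k p hp).ne'
  obtain ⟨B, hB⟩ := hK.exists_bound_of_continuousOn (hGcont.mono hKX)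
  refine ⟨c1 * max B 1, mul_pos hc1pos (lt_of_lt_of_le one_pos (le_max_right _ _)),
    fun x hx => ?_⟩
  have hxX : x ∈ X := hKX hx
  set S := ∑ k, γ k x * (inner ℝ e (mv (J k) (Hx x)) : ℝ) ^ 2 with hS
  have hSnonneg : 0 ≤ S :=
    Finset.sum_nonneg fun k _ => mul_nonneg (hγpos k x hxX).le (sq_nonneg _)
  have hf1γ : f1 x ≤ G x * S := by
    rw [hG, Finset.sum_mul, hf1]
    apply Finset.sum_le_sum
    intro k _
    have hγk : 0 < γ k x := hγpos k x hxX
    have hsingle : γ k x * (inner ℝ e (mv (J k) (Hx x)) : ℝ) ^ 2 ≤ S := by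
      rw [hS]
      exact Finset.single_le_sum
        (f := fun j => γ j x * (inner ℝ e (mv (J j) (Hx x)) : ℝ) ^ 2)
        (fun j _ => mul_nonneg (hγpos j x hxX).le (sq_nonneg _)) (Finset.mem_univ k)
    calc (inner ℝ e (mv (J k) (Hx x)) : ℝ) ^ 2
        = (γ k x)⁻¹ * (γ k x * (inner ℝ e (mv (J k) (Hx x)) : ℝ) ^ 2) := by
          field_simp
      _ ≤ (γ k x)⁻¹ * S := mul_le_mul_of_nonneg_left hsingle (inv_nonneg.mpr hγk.le)
  have hGB : G x ≤ max B 1 := by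
    calc G x ≤ |G x| := le_abs_self _
      _ = ‖G x‖ := (Real.norm_eq_abs _).symm
      _ ≤ B := hB x hx
      _ ≤ max B 1 := le_max_left _ _
  calc infDist x T ^ 2 ≤ c1 * f1 x := hglobal1 x hx
    _ ≤ c1 * (G x * S) := mul_le_mul_of_nonneg_left hf1γ hc1pos.le
    _ ≤ c1 * (max B 1 * S) :=
        mul_le_mul_of_nonneg_left (mul_le_mul_of_nonneg_right hGB hSnonneg) hc1pos.le
    _ = c1 * max B 1 * S := by ring
end

section
/- Let V₁, …, V_N ⊆ ℝⁿ be linear subspaces. Then there exist constants c₁, c₂ > 0 such that for all x ∈ ℝⁿ: c₁ · Σ_{k=1}^N dist(x, V_k) ≤ dist(x, ⋂_{k=1}^N V_k) ≤ c₂ · Σ_{k=1}^N dist(x, V_k). -/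
open Set Metric

section aux

variable {E : Type*} [NormedAddCommGroup E] [InnerProductSpace ℝ E]

lemma aux_infDist_smul_le (p : Submodule ℝ E) {c : ℝ} (hc : 0 < c) (y : E) :
    infDist (c • y) (p : Set E) ≤ c * infDist y (p : Set E) := by
  refine le_of_forall_gt fun r hr => ?_
  have hne : (p : Set E).Nonempty := ⟨0, p.zero_mem⟩
  have h1 : infDist y (p : Set E) < r / c := by
    rw [lt_div_iff₀ hc, mul_comm]; exact hr
  obtain ⟨z, hz, hd⟩ := (infDist_lt_iff hne).1 h1
  have hlt : dist (c • y) (c • z) < r := by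
    rw [dist_smul₀, Real.norm_of_nonneg hc.le]
    calc c * dist y z < c * (r / c) := mul_lt_mul_of_pos_left hd hc
      _ = r := by field_simp
  exact (infDist_le_dist_of_mem (p.smul_mem c hz)).trans_lt hlt

lemma aux_infDist_smul (p : Submodule ℝ E) {c : ℝ} (hc : 0 < c) (y : E) :
    infDist (c • y) (p : Set E) = c * infDist y (p : Set E) := by
  refine le_antisymm (aux_infDist_smul_le p hc y) ?_
  have h := aux_infDist_smul_le p (inv_pos.2 hc) (c • y)
  rw [inv_smul_smul₀ hc.ne'] at h
  calc c * infDist y (p : Set E) ≤ c * (c⁻¹ * infDist (c • y) (p : Set E)) :=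
        mul_le_mul_of_nonneg_left h hc.le
    _ = infDist (c • y) (p : Set E) := by field_simp

lemma aux_infDist_add (p : Submodule ℝ E) {w : E} (hw : w ∈ p) (x : E) :
    infDist (x + w) (p : Set E) = infDist x (p : Set E) := by
  have hiso : Isometry (fun z : E => z + w) :=
    Isometry.of_dist_eq fun a b => by simp [dist_eq_norm]
  have himg : (fun z : E => z + w) '' (p : Set E) = (p : Set E) := by
    ext z
    constructor
    · rintro ⟨a, ha, rfl⟩; exact p.add_mem ha hw
    · intro hz; exact ⟨z - w, p.sub_mem hz hw, by simp⟩
  calc infDist (x + w) (p : Set E)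
      = infDist ((fun z : E => z + w) x) ((fun z : E => z + w) '' (p : Set E)) := by
        rw [himg]
    _ = infDist x (p : Set E) := infDist_image hiso

lemma aux_infDist_proj (p : Submodule ℝ E) [Submodule.HasOrthogonalProjection p] (x : E) :
    infDist x (p : Set E) = ‖x - Submodule.orthogonalProjectionOnto p x‖ := by
  rw [infDist_eq_iInf, ← Submodule.starProjection_apply, Submodule.starProjection_minimal]
  simp_rw [dist_eq_norm]
  rfl

end aux

/-- Equivalence of the distance to an intersection of linear subspaces of `ℝⁿ` with the
sum of the distances: there are `c₁, c₂ > 0` with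
`c₁ Σ_k dist(x,V_k) ≤ dist(x, ⋂_k V_k) ≤ c₂ Σ_k dist(x,V_k)` for all `x`. -/
theorem dist_iInter_subspaces_equiv_sum_dists
    (n N : ℕ) (V : Fin N → Submodule ℝ (EuclideanSpace ℝ (Fin n))) :
    ∃ c₁ > (0:ℝ), ∃ c₂ > (0:ℝ), ∀ x : EuclideanSpace ℝ (Fin n),
      c₁ * ∑ k, infDist x (V k : Set (EuclideanSpace ℝ (Fin n)))
          ≤ infDist x (⋂ k, (V k : Set (EuclideanSpace ℝ (Fin n))))
      ∧ infDist x (⋂ k, (V k : Set (EuclideanSpace ℝ (Fin n))))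
          ≤ c₂ * ∑ k, infDist x (V k : Set (EuclideanSpace ℝ (Fin n))) := by
  set E := EuclideanSpace ℝ (Fin n)
  set W : Submodule ℝ E := ⨅ k, V k with hWdef
  have hWcoe : (W : Set E) = ⋂ k, (V k : Set E) := Submodule.coe_iInf V
  have hWle : ∀ k, W ≤ V k := fun k => iInf_le V k
  have hWne : (W : Set E).Nonempty := ⟨0, W.zero_mem⟩
  -- the sum function
  set f : E → ℝ := fun x => ∑ k, infDist x (V k : Set E) with hfdef
  have hf_nonneg : ∀ x, 0 ≤ f x := fun x =>
    Finset.sum_nonneg fun k _ => infDist_nonneg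
  have hf_cont : Continuous f := by
    exact continuous_finset_sum _ fun k _ => continuous_infDist_pt _
  -- lower bound:  f x ≤ N * infDist x W
  have hlow : ∀ x : E, f x ≤ N * infDist x (W : Set E) := by
    intro x
    calc f x ≤ ∑ _k : Fin N, infDist x (W : Set E) :=
          Finset.sum_le_sum fun k _ =>
            infDist_le_infDist_of_subset (by rw [hWcoe]; exact iInter_subset _ k) hWne
      _ = N * infDist x (W : Set E) := by simp [Finset.sum_const]
  -- upper bound constant
  have hupper : ∃ c₂ > (0:ℝ), ∀ x : E, infDist x (W : Set E) ≤ c₂ * f x := by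
    by_cases hW : W = ⊤
    · refine ⟨1, one_pos, fun x => ?_⟩
      have : infDist x (W : Set E) = 0 := infDist_zero_of_mem (by rw [hW]; trivial)
      rw [this]
      simpa using hf_nonneg x
    · -- W ≠ ⊤, so Wᗮ ≠ ⊥
      have hWo : Wᗮ ≠ ⊥ := fun h => hW (Submodule.orthogonal_eq_bot_iff.1 h)
      obtain ⟨y0, hy0W, hy0⟩ := Submodule.ne_bot_iff _ |>.1 hWo
      set S : Set E := (Wᗮ : Set E) ∩ sphere 0 1 with hSdef
      have hSne : S.Nonempty := by
        refine ⟨‖y0‖⁻¹ • y0, Wᗮ.smul_mem _ hy0W, ?_⟩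
        simp [norm_smul, norm_ne_zero_iff.2 hy0,
          inv_mul_cancel₀ (norm_ne_zero_iff.2 hy0)]
      have hScompact : IsCompact S := by
        refine Metric.isCompact_of_isClosed_isBounded
          (Wᗮ.closed_of_finiteDimensional.inter isClosed_sphere) ?_
        exact (Metric.isBounded_sphere).subset inter_subset_right
      obtain ⟨y, hyS, hymin⟩ := hScompact.exists_isMinOn hSne hf_cont.continuousOn
      have hyW : y ∈ Wᗮ := hyS.1
      have hynorm : ‖y‖ = 1 := by simpa using hyS.2
      have hfy_pos : 0 < f y := by
        rcases (hf_nonneg y).lt_or_eq with h | h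
        · exact h
        · exfalso
          have hall : ∀ k ∈ Finset.univ, infDist y (V k : Set E) = 0 :=
            (Finset.sum_eq_zero_iff_of_nonneg fun k _ => infDist_nonneg).1 h.symm
          have hyVk : ∀ k, y ∈ V k := fun k =>
            ((V k).closed_of_finiteDimensional.mem_iff_infDist_zero
              ⟨0, (V k).zero_mem⟩).2 (hall k (Finset.mem_univ k))
          have hyWmem : y ∈ W := Submodule.mem_iInf V |>.2 hyVk
          have : y = 0 := by
            have := (Submodule.orthogonal_disjoint W).le_bot ⟨hyWmem, hyW⟩
            simpa using this
          rw [this] at hynorm; simp at hynorm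
      refine ⟨(f y)⁻¹, inv_pos.2 hfy_pos, fun x => ?_⟩
      set z : E := x - Submodule.orthogonalProjectionOnto W x with hzdef
      have hgx : infDist x (W : Set E) = ‖z‖ := aux_infDist_proj W x
      have hfx : f x = f z := by
        refine Finset.sum_congr rfl fun k _ => ?_
        have hx : x = z + (Submodule.orthogonalProjectionOnto W x : E) := by rw [hzdef]; abel
        rw [hx]
        exact aux_infDist_add (V k) (hWle k (Submodule.orthogonalProjectionOnto W x).2) z
      by_cases hz : z = 0
      · rw [hgx, hz]
        simpa using mul_nonneg (inv_pos.2 hfy_pos).le (hf_nonneg x)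
      · have hzn : 0 < ‖z‖ := norm_pos_iff.2 hz
        set u : E := ‖z‖⁻¹ • z with hudef
        have huS : u ∈ S := by
          constructor
          · exact Wᗮ.smul_mem _ (Submodule.sub_starProjection_mem_orthogonal (K := W) x)
          · simp [hudef, norm_smul, inv_mul_cancel₀ hzn.ne']
        have hzu : z = ‖z‖ • u := by
          rw [hudef, smul_smul, mul_inv_cancel₀ hzn.ne', one_smul]
        have hfz : f z = ‖z‖ * f u := by
          have h2 : f (‖z‖ • u) = ‖z‖ * f u := by
            simp only [hfdef, Finset.mul_sum]
            exact Finset.sum_congr rfl fun k _ => aux_infDist_smul (V k) hzn u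
          rw [← h2, ← hzu]
        have hfu : f y ≤ f u := hymin huS
        rw [hgx, hfx, hfz]
        calc ‖z‖ = (f y)⁻¹ * (‖z‖ * f y) := by field_simp
          _ ≤ (f y)⁻¹ * (‖z‖ * f u) := by
              exact mul_le_mul_of_nonneg_left
                (mul_le_mul_of_nonneg_left hfu hzn.le) (inv_pos.2 hfy_pos).le
  obtain ⟨c₂, hc₂, hub⟩ := hupper
  refine ⟨(N + 1 : ℝ)⁻¹, by positivity, c₂, hc₂, fun x => ?_⟩
  constructor
  · rw [← hWcoe]
    have h1 : ((N:ℝ) + 1)⁻¹ * f x ≤ ((N:ℝ)+1)⁻¹ * ((N:ℝ) * infDist x (W : Set E)) :=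
      mul_le_mul_of_nonneg_left (hlow x) (by positivity)
    refine h1.trans ?_
    have hD : 0 ≤ infDist x (W : Set E) := infDist_nonneg
    have hone : ((N:ℝ)+1)⁻¹ * (N:ℝ) ≤ 1 := by
      rw [inv_mul_le_iff₀ (by positivity)]; linarith
    rw [← mul_assoc]
    exact mul_le_of_le_one_left hD hone
  · rw [← hWcoe]; exact hub x
end

section
/- Let A₁, …, A_N ⊆ ℝⁿ be affine subspaces (translates of linear subspaces) with ⋂_{k=1}^N A_k ≠ ∅. Then there exists a constant c > 0 such that for all x ∈ ℝⁿ: dist(x, ⋂_{k=1}^N A_k) ≤ c · Σ_{k=1}^N dist(x, A_k). -/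
open Set Metric

lemma infDist_submodule_aux {n : ℕ} (W : Submodule ℝ (EuclideanSpace ℝ (Fin n)))
    (y : EuclideanSpace ℝ (Fin n)) :
    infDist y (W : Set (EuclideanSpace ℝ (Fin n))) =
      ‖((Submodule.orthogonalProjectionOnto Wᗮ y : Wᗮ) : EuclideanSpace ℝ (Fin n))‖ := by
  have h1 : infDist y (W : Set (EuclideanSpace ℝ (Fin n)))
      = ‖y - Submodule.orthogonalProjectionOnto W y‖ := by
    rw [infDist_eq_iInf]
    simp_rw [dist_eq_norm]
    exact (Submodule.starProjection_minimal y).symm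
  rw [h1, ← Submodule.starProjection_apply Wᗮ, Submodule.starProjection_orthogonal_val, Submodule.starProjection_apply]

/-- For affine subspaces `A₁, …, A_N` of `ℝⁿ` (translates of linear subspaces) with
nonempty intersection, there is `c > 0` such that
`dist(x, ⋂_k A_k) ≤ c Σ_k dist(x, A_k)` for all `x`. -/
theorem dist_iInter_affine_le_sum_dists
    (n N : ℕ) (A : Fin N → Set (EuclideanSpace ℝ (Fin n)))
    (hA : ∀ k, ∃ (x₀ : EuclideanSpace ℝ (Fin n))
        (U : Submodule ℝ (EuclideanSpace ℝ (Fin n))),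
        A k = (fun v => x₀ + v) '' (U : Set (EuclideanSpace ℝ (Fin n))))
    (hint : (⋂ k, A k).Nonempty) :
    ∃ c > (0:ℝ), ∀ x : EuclideanSpace ℝ (Fin n),
      infDist x (⋂ k, A k) ≤ c * ∑ k, infDist x (A k) := by
  classical
  obtain ⟨p, hp⟩ := hint
  rw [mem_iInter] at hp
  choose x₀ U hU using hA
  -- translation by p is an isometry and a bijection
  have hiso : Isometry (fun v : EuclideanSpace ℝ (Fin n) => p + v) :=
    Isometry.of_dist_eq fun a b => by
      simp [dist_eq_norm, add_sub_add_left_eq_sub]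
  have hbij : Function.Bijective (fun v : EuclideanSpace ℝ (Fin n) => p + v) :=
    (Equiv.addLeft p).bijective
  -- each A k is p + U k
  have hAk : ∀ k, A k = (fun v : EuclideanSpace ℝ (Fin n) => p + v) '' (U k : Set (EuclideanSpace ℝ (Fin n))) := by
    intro k
    have hpk := hp k
    rw [hU k] at hpk
    obtain ⟨u, hu, hpu⟩ := hpk
    rw [hU k]
    ext y
    constructor
    · rintro ⟨v, hv, rfl⟩
      exact ⟨v - u, sub_mem hv hu, by rw [← hpu]; dsimp only; abel⟩
    · rintro ⟨v, hv, rfl⟩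
      exact ⟨u + v, add_mem hu hv, by rw [← hpu]; dsimp only; abel⟩
  set W : Submodule ℝ (EuclideanSpace ℝ (Fin n)) := ⨅ k, U k with hW
  have hWcoe : (W : Set (EuclideanSpace ℝ (Fin n))) = ⋂ k, (U k : Set (EuclideanSpace ℝ (Fin n))) := by
    simp [hW, Submodule.coe_iInf]
  have hInter : (⋂ k, A k) = (fun v : EuclideanSpace ℝ (Fin n) => p + v) '' (W : Set (EuclideanSpace ℝ (Fin n))) := by
    rw [hWcoe, Set.image_iInter hbij]
    exact iInter_congr hAk
  -- the linear map collecting projections to (U k)ᗮ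
  let T : EuclideanSpace ℝ (Fin n) →ₗ[ℝ] (Fin N → EuclideanSpace ℝ (Fin n)) :=
    LinearMap.pi fun k =>
      ((U k)ᗮ.subtype.comp (Submodule.orthogonalProjectionOnto (U k)ᗮ).toLinearMap)
  have hTmem : ∀ y : EuclideanSpace ℝ (Fin n), y ∈ W → T y = 0 := by
    intro y hy
    funext k
    have hyk : y ∈ U k := by
      rw [hW, Submodule.mem_iInf] at hy
      exact hy k
    have : Submodule.orthogonalProjectionOnto (U k)ᗮ y = 0 := by
      rw [Submodule.orthogonalProjectionOnto_eq_zero_iff, Submodule.orthogonal_orthogonal]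
      exact hyk
    simp [T, this]
  -- restriction of T to Wᗮ is injective
  have hker : LinearMap.ker (T.comp Wᗮ.subtype) = ⊥ := by
    rw [LinearMap.ker_eq_bot']
    rintro ⟨v, hv⟩ hTv
    have hTv' : T v = 0 := hTv
    have hvU : ∀ k, v ∈ U k := by
      intro k
      have : (Submodule.orthogonalProjectionOnto (U k)ᗮ v : EuclideanSpace ℝ (Fin n)) = 0 := congrFun hTv' k
      have h0 : Submodule.orthogonalProjectionOnto (U k)ᗮ v = 0 := by
        exact_mod_cast Subtype.ext this
      rw [Submodule.orthogonalProjectionOnto_eq_zero_iff, Submodule.orthogonal_orthogonal] at h0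
      exact h0
    have hvW : v ∈ W := by
      rw [hW, Submodule.mem_iInf]; exact hvU
    have : v = 0 := by
      have := (Submodule.mem_orthogonal Wᗮ v).mp (Submodule.le_orthogonal_orthogonal W hvW)
      exact inner_self_eq_zero.mp (this v hv)
    exact Subtype.ext this
  obtain ⟨K, hK0, hK⟩ := (T.comp Wᗮ.subtype).exists_antilipschitzWith hker
  refine ⟨K, by exact_mod_cast hK0, ?_⟩
  intro x
  set y : EuclideanSpace ℝ (Fin n) := x - p with hy
  have hxy : x = p + y := by rw [hy]; abel
  -- rewrite all distances via translation
  have hdist_inter : infDist x (⋂ k, A k)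
      = infDist y (W : Set (EuclideanSpace ℝ (Fin n))) := by
    rw [hInter, hxy, infDist_image hiso]
  have hdist_k : ∀ k, infDist x (A k) = infDist y (U k : Set (EuclideanSpace ℝ (Fin n))) := by
    intro k
    rw [hAk k, hxy, infDist_image hiso]
  rw [hdist_inter]
  simp only [hdist_k]
  -- set v := projection of y onto Wᗮ
  set v : Wᗮ := Submodule.orthogonalProjectionOnto Wᗮ y with hv
  have h1 : infDist y (W : Set (EuclideanSpace ℝ (Fin n))) = ‖(v : EuclideanSpace ℝ (Fin n))‖ := infDist_submodule_aux W y
  have hyv : y - (v : EuclideanSpace ℝ (Fin n)) ∈ W := by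
    rw [hv, ← Submodule.starProjection_apply Wᗮ, Submodule.starProjection_orthogonal_val, Submodule.starProjection_apply]
    simp only [sub_sub_cancel]
    exact (Submodule.orthogonalProjectionOnto W y).2
  have hTv : T (v : EuclideanSpace ℝ (Fin n)) = T y := by
    have h2 : T y - T (v : EuclideanSpace ℝ (Fin n)) = 0 := by rw [← map_sub]; exact hTmem _ hyv
    exact (sub_eq_zero.mp h2).symm
  have hnorm_v : ‖(v : EuclideanSpace ℝ (Fin n))‖ ≤ (K : ℝ) * ‖T y‖ := by
    have h3 := hK.le_mul_dist v 0
    simpa [dist_eq_norm, map_zero, hTv] using h3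
  have hcomp : ∀ k, ‖T y k‖ = infDist y ((U k : Set (EuclideanSpace ℝ (Fin n)))) := by
    intro k
    rw [infDist_submodule_aux (U k) y]
    rfl
  have hsum : ‖T y‖ ≤ ∑ k, infDist y ((U k : Set (EuclideanSpace ℝ (Fin n)))) := by
    rcases isEmpty_or_nonempty (Fin N) with h | h
    · have hT0 : T y = 0 := funext fun k => h.elim k
      simp [hT0]
    · apply (pi_norm_le_iff_of_nonneg ?_).mpr
      · intro k
        rw [hcomp k]
        exact Finset.single_le_sum
          (f := fun i => infDist y ((U i : Set (EuclideanSpace ℝ (Fin n)))))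
          (fun i _ => infDist_nonneg) (Finset.mem_univ k)
      · exact Finset.sum_nonneg fun i _ => infDist_nonneg
  calc infDist y (W : Set (EuclideanSpace ℝ (Fin n))) = ‖(v : EuclideanSpace ℝ (Fin n))‖ := h1
    _ ≤ (K : ℝ) * ‖T y‖ := hnorm_v
    _ ≤ (K : ℝ) * ∑ k, infDist y ((U k : Set (EuclideanSpace ℝ (Fin n)))) :=
        mul_le_mul_of_nonneg_left hsum (by positivity)
end

section
/- Let 𝕏 ⊆ ℝⁿ be open, let 𝕐 ⊆ ℝⁿ be open, and let Φ : 𝕏 → 𝕐 be a C¹-diffeomorphism (playing the role of the gradient map H_x). Let V ⊆ ℝⁿ be a linear subspace with V ∩ 𝕐 ≠ ∅. Then for every compact set K ⊆ 𝕏 there exists c > 0 such that for all x ∈ K: dist(x, Φ⁻¹(V ∩ 𝕐)) ≤ c · dist(Φ(x), V), where dist(x, M) = inf_{z ∈ M} ‖x − z‖. -/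
open Set Metric

/-- For a C¹-diffeomorphism `Φ : 𝕏 → 𝕐` between open subsets of `ℝⁿ` and a linear
subspace `V` meeting `𝕐`, on every compact `K ⊆ 𝕏` one has
`dist(x, Φ⁻¹(V ∩ 𝕐)) ≤ c · dist(Φ(x), V)`. -/
theorem dist_preimage_le_dist_image
    (n : ℕ)
    (X Y : Set (EuclideanSpace ℝ (Fin n))) (hX : IsOpen X) (hY : IsOpen Y)
    (Φ Ψ : EuclideanSpace ℝ (Fin n) → EuclideanSpace ℝ (Fin n))
    (hΦC1 : ContDiffOn ℝ 1 Φ X) (hΨC1 : ContDiffOn ℝ 1 Ψ Y)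
    (hΦmaps : MapsTo Φ X Y) (hΨmaps : MapsTo Ψ Y X)
    (hleft : ∀ p ∈ X, Ψ (Φ p) = p) (hright : ∀ q ∈ Y, Φ (Ψ q) = q)
    (V : Submodule ℝ (EuclideanSpace ℝ (Fin n)))
    (hVY : ((V : Set (EuclideanSpace ℝ (Fin n))) ∩ Y).Nonempty) :
    ∀ K ⊆ X, IsCompact K → ∃ c > (0:ℝ), ∀ x ∈ K,
      infDist x (Φ ⁻¹' ((V : Set (EuclideanSpace ℝ (Fin n))) ∩ Y) ∩ X)
        ≤ c * infDist (Φ x) (V : Set (EuclideanSpace ℝ (Fin n))) := by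
  intro K hKX hK
  set S := Φ ⁻¹' ((V : Set (EuclideanSpace ℝ (Fin n))) ∩ Y) ∩ X with hSdef
  have hVclosed : IsClosed (V : Set (EuclideanSpace ℝ (Fin n))) :=
    V.closed_of_finiteDimensional
  have hVne : (V : Set (EuclideanSpace ℝ (Fin n))).Nonempty := ⟨0, V.zero_mem⟩
  -- local claim
  have key : ∀ x0 ∈ K, ∃ c : ℝ, 0 < c ∧ ∃ U ∈ nhds x0, ∀ x ∈ U,
      infDist x S ≤ c * infDist (Φ x) (V : Set (EuclideanSpace ℝ (Fin n))) := by
    intro x0 hx0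
    have hx0X : x0 ∈ X := hKX hx0
    have hΦcont : ContinuousAt Φ x0 :=
      hΦC1.continuousOn.continuousAt (hX.mem_nhds hx0X)
    by_cases hg : Φ x0 ∈ (V : Set (EuclideanSpace ℝ (Fin n)))
    · -- near a point mapped into V : use local Lipschitz bound for Ψ
      have hΦx0Y : Φ x0 ∈ Y := hΦmaps hx0X
      have hΨat : ContDiffAt ℝ 1 Ψ (Φ x0) := hΨC1.contDiffAt (hY.mem_nhds hΦx0Y)
      obtain ⟨L, t, ht, hLip⟩ := hΨat.exists_lipschitzOnWith
      obtain ⟨ε, hε, hball⟩ :=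
        Metric.mem_nhds_iff.1 (Filter.inter_mem ht (hY.mem_nhds hΦx0Y))
      refine ⟨2 * (L : ℝ) + 1, by positivity,
        X ∩ Φ ⁻¹' (Metric.ball (Φ x0) (ε / 4)), ?_, ?_⟩
      · exact Filter.inter_mem (hX.mem_nhds hx0X)
          (hΦcont.preimage_mem_nhds (Metric.ball_mem_nhds _ (by positivity)))
      · rintro x ⟨hxX, hxB⟩
        have hxB' : dist (Φ x) (Φ x0) < ε / 4 := mem_ball.1 hxB
        set d := infDist (Φ x) (V : Set (EuclideanSpace ℝ (Fin n))) with hd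
        have hd0 : 0 ≤ d := infDist_nonneg
        have hdlt : d < ε / 4 := lt_of_le_of_lt (infDist_le_dist_of_mem hg) hxB'
        rcases eq_or_lt_of_le hd0 with h0 | h0
        · have hΦxV : Φ x ∈ (V : Set (EuclideanSpace ℝ (Fin n))) :=
            (hVclosed.mem_iff_infDist_zero hVne).2 h0.symm
          have hxS : x ∈ S := ⟨⟨hΦxV, hΦmaps hxX⟩, hxX⟩
          rw [infDist_zero_of_mem hxS, ← h0, mul_zero]
        · obtain ⟨v, hvV, hvd⟩ := (infDist_lt_iff hVne).1
            (show d < 2 * d by linarith)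
          have hvball : v ∈ Metric.ball (Φ x0) ε := by
            have : dist v (Φ x0) ≤ dist v (Φ x) + dist (Φ x) (Φ x0) := dist_triangle _ _ _
            rw [mem_ball]
            rw [dist_comm] at hvd
            linarith
          have hvY : v ∈ Y := (hball hvball).2
          have hvt : v ∈ t := (hball hvball).1
          have hΦxt : Φ x ∈ t := by
            refine (hball ?_).1
            exact mem_ball.2 (by linarith)
          have hΨvS : Ψ v ∈ S := by
            have hmem : Φ (Ψ v) ∈ (V : Set (EuclideanSpace ℝ (Fin n))) ∩ Y := by
              rw [hright v hvY]; exact ⟨hvV, hvY⟩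
            exact ⟨hmem, hΨmaps hvY⟩
          have h1 : infDist x S ≤ dist x (Ψ v) := infDist_le_dist_of_mem hΨvS
          have h2 : dist x (Ψ v) ≤ (L : ℝ) * dist (Φ x) v := by
            have := hLip.dist_le_mul (Φ x) hΦxt v hvt
            rwa [hleft x hxX] at this
          calc infDist x S ≤ (L : ℝ) * dist (Φ x) v := h1.trans h2
            _ ≤ (L : ℝ) * (2 * d) := by
                exact mul_le_mul_of_nonneg_left (le_of_lt hvd) (by positivity)
            _ ≤ (2 * (L : ℝ) + 1) * d := by nlinarith
    · -- away from V : the distance to V is bounded below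
      set g0 := infDist (Φ x0) (V : Set (EuclideanSpace ℝ (Fin n))) with hg0
      have hg0pos : 0 < g0 := by
        rcases lt_or_eq_of_le (infDist_nonneg :
            (0:ℝ) ≤ infDist (Φ x0) (V : Set (EuclideanSpace ℝ (Fin n)))) with h | h
        · exact h
        · exact absurd ((hVclosed.mem_iff_infDist_zero hVne).2 h.symm) hg
      set M := infDist x0 S + 1 with hM
      have hMpos : 0 < M := by
        have : (0:ℝ) ≤ infDist x0 S := infDist_nonneg
        linarith
      refine ⟨2 * M / g0, by positivity,
        {x | infDist x S < M} ∩
          (fun x => infDist (Φ x) (V : Set (EuclideanSpace ℝ (Fin n)))) ⁻¹' Ioi (g0 / 2),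
        ?_, ?_⟩
      · refine Filter.inter_mem ?_ ?_
        · exact (continuous_infDist_pt S).continuousAt.preimage_mem_nhds
            (Iio_mem_nhds (by linarith))
        · refine (((continuous_infDist_pt
            (V : Set (EuclideanSpace ℝ (Fin n)))).continuousAt).comp hΦcont
            ).preimage_mem_nhds (Ioi_mem_nhds ?_)
          show g0 / 2 < infDist (Φ x0) (V : Set (EuclideanSpace ℝ (Fin n)))
          linarith
      · rintro x ⟨hx1, hx2⟩
        have hx1' : infDist x S < M := hx1
        have hx2' : g0 / 2 < infDist (Φ x) (V : Set (EuclideanSpace ℝ (Fin n))) := hx2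
        have : M = 2 * M / g0 * (g0 / 2) := by field_simp
        calc infDist x S ≤ M := le_of_lt hx1'
          _ = 2 * M / g0 * (g0 / 2) := this
          _ ≤ 2 * M / g0 * infDist (Φ x) (V : Set (EuclideanSpace ℝ (Fin n))) := by
              apply mul_le_mul_of_nonneg_left (le_of_lt hx2') (by positivity)
  choose c hcpos U hUnhds hUbound using key
  obtain ⟨t, ht⟩ := hK.elim_nhds_subcover' (fun x hx => U x hx) (fun x hx => hUnhds x hx)
  have hsum : 0 ≤ ∑ i ∈ t, c i.1 i.2 :=
    Finset.sum_nonneg fun i _ => (hcpos i.1 i.2).le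
  refine ⟨1 + ∑ i ∈ t, c i.1 i.2, by linarith, ?_⟩
  intro x hx
  have hxU := ht hx
  simp only [mem_iUnion] at hxU
  obtain ⟨i, hit, hxU⟩ := hxU
  have hb := hUbound i.1 i.2 x hxU
  have hci : c i.1 i.2 ≤ 1 + ∑ j ∈ t, c j.1 j.2 := by
    have := Finset.single_le_sum (f := fun j : K => c j.1 j.2)
      (fun j _ => (hcpos j.1 j.2).le) hit
    linarith
  calc infDist x S ≤ c i.1 i.2 * infDist (Φ x) (V : Set (EuclideanSpace ℝ (Fin n))) := hb
    _ ≤ (1 + ∑ j ∈ t, c j.1 j.2) * infDist (Φ x) (V : Set (EuclideanSpace ℝ (Fin n))) :=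
        mul_le_mul_of_nonneg_right hci infDist_nonneg
end
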